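/- The following two classes of directed graphs are definable by sentences of BndSCL under bounded semantics: (1) the class of directed graphs G = (V,E) (finite or infinite) that contain a cycle, i.e. a finite sequence u₁,…,u_k with k > 1, E u_i u_{i+1} for all i < k, u₁ = u_k, and u_i ≠ u_j for distinct i,j ∈ {1,…,k−1}; (2) the class of directed graphs with finite diameter, i.e. such that sup{d(u,v) : u,v ∈ V} is finite, where d(u,v) denotes directed distance. Concretely, the sentence ∃x∃y(x = y ∧ L(Eyx ∨ ∃z(Eyz ∧ ∃y(y = z ∧ C_L)))) is true in a directed graph under bounded semantics iff the graph contains a cycle, and the sentence ∀x∀y(x = y ∨ L(Exy ∨ ∃z(Exz ∧ ∃x(x = z ∧ C_L)))) is true under bounded semantics iff the graph has finite diameter. -/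

import Mathlib

/-
Common formalization of the logics SCL (static computation logic, unbounded
game-theoretic semantics) and BndSCL (bounded semantics), following the paper
"First-order logic with self-reference".

* Games are played on arbitrary (possibly infinite) arenas; plays are maximal
  walks; strategies are functions from finite walks (histories) to positions;
  infinite plays, and finite plays ending at a dead end where `win` holds for
  neither player, are won by nobody.
* The semantic games are formalized with positions carrying the current
  (sub)formula, an environment binding each label symbol to the labelled
  formula it most recently named (this is the standard closure rendering of
  "reference formula of a claim-symbol occurrence"), the current assignment
  and the polarity (+ = true, − = false).  The bounded game additionally
  carries a clock value.
-/

set_option autoImplicit false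

universe u

/-! ## Generic two-player games on (possibly infinite) arenas -/

inductive Player : Type
  | eloise : Player
  | abelard : Player
deriving DecidableEq

def Player.opp : Player → Player
  | .eloise => .abelard
  | .abelard => .eloise

/-- A game arena: an ownership function (corresponding to the partition
`V = V₀ ∪ V₁`), an edge relation, and a predicate telling which player (if
any) wins a play ending at a given dead-end position. -/
structure GameArena (P : Type u) where
  turn : P → Player
  edge : P → P → Prop
  win : P → Player → Prop

namespace GameArena

variable {P : Type u} (A : GameArena P)

def DeadEnd (u : P) : Prop := ∀ x, ¬ A.edge u x

/-- `w` is a finite nonempty walk whose first element is `v`. -/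
def IsWalkFrom (v : P) (w : List P) : Prop :=
  w.head? = some v ∧ List.Chain' A.edge w

/-- A finite (maximal) play from `v`: a walk whose last element is a dead end. -/
def IsFinitePlay (v : P) (w : List P) : Prop :=
  A.IsWalkFrom v w ∧ ∀ u, w.getLast? = some u → A.DeadEnd u

/-- An infinite play from `v`. -/
def IsInfPlay (v : P) (f : ℕ → P) : Prop :=
  f 0 = v ∧ ∀ n, A.edge (f n) (f (n + 1))

/-- A strategy (a function from histories to positions) of player `pl` is
legal if it always prescribes a move along an edge whenever a move exists. -/
def LegalFor (pl : Player) (v : P) (σ : List P → P) : Prop :=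
  ∀ w u, A.IsWalkFrom v w → w.getLast? = some u → A.turn u = pl →
    (∃ x, A.edge u x) → A.edge u (σ w)

/-- The strategy `σ` of player `pl` is followed in the finite play `w`. -/
def FollowsFin (pl : Player) (σ : List P → P) (w : List P) : Prop :=
  ∀ q u x, (q ++ [x]) <+: w → q.getLast? = some u → A.turn u = pl → x = σ q

/-- The strategy `σ` of player `pl` is followed in the infinite play `f`. -/
def FollowsInf (pl : Player) (σ : List P → P) (f : ℕ → P) : Prop :=
  ∀ n, A.turn (f n) = pl →
    f (n + 1) = σ (List.ofFn fun i : Fin (n + 1) => f i)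

/-- `σ` is a winning strategy of player `pl` from `v`: it is legal, every
finite maximal play following it ends in a dead end won by `pl`, and no
infinite play follows it (infinite plays are won by neither player). -/
def WinningStrategy (pl : Player) (v : P) (σ : List P → P) : Prop :=
  A.LegalFor pl v σ ∧
  (∀ w, A.IsFinitePlay v w → A.FollowsFin pl σ w →
      ∃ u, w.getLast? = some u ∧ A.win u pl) ∧
  (∀ f, A.IsInfPlay v f → ¬ A.FollowsInf pl σ f)

def HasWinningStrategy (pl : Player) (v : P) : Prop :=
  ∃ σ : List P → P, A.WinningStrategy pl v σ

end GameArena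

/-- A positional strategy: its moves depend only on the current position. -/
def Positional {P : Type u} (σ : List P → P) : Prop :=
  ∀ q q' : List P, q.getLast? = q'.getLast? → σ q = σ q'

/-! ## Syntax of SCL / BndSCL -/

/-- A purely relational vocabulary. -/
structure Vocab : Type 1 where
  Rel : Type
  arity : Rel → ℕ

/-- Formulas of SCL / BndSCL over the vocabulary `V`.  Variables and label
symbols are natural numbers; `claim L` is the claim symbol `C_L` and
`lab L φ` is the labelled formula `L φ`. -/
inductive SCLFormula (V : Vocab) : Type
  | bot : SCLFormula V
  | eq (x y : ℕ) : SCLFormula V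
  | rel (R : V.Rel) (args : Fin (V.arity R) → ℕ) : SCLFormula V
  | claim (L : ℕ) : SCLFormula V
  | not (φ : SCLFormula V) : SCLFormula V
  | and (φ ψ : SCLFormula V) : SCLFormula V
  | or (φ ψ : SCLFormula V) : SCLFormula V
  | ex (x : ℕ) (φ : SCLFormula V) : SCLFormula V
  | all (x : ℕ) (φ : SCLFormula V) : SCLFormula V
  | lab (L : ℕ) (φ : SCLFormula V) : SCLFormula V

namespace SCLFormula

variable {V : Vocab}

/-- First-order atoms. -/
def IsFOAtom : SCLFormula V → Prop
  | .bot => True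
  | .eq _ _ => True
  | .rel _ _ => True
  | _ => False

/-- Purely first-order formulas (no claim symbols, no label symbols). -/
def IsFO : SCLFormula V → Prop
  | .bot => True
  | .eq _ _ => True
  | .rel _ _ => True
  | .claim _ => False
  | .not φ => IsFO φ
  | .and φ ψ => IsFO φ ∧ IsFO ψ
  | .or φ ψ => IsFO φ ∧ IsFO ψ
  | .ex _ φ => IsFO φ
  | .all _ φ => IsFO φ
  | .lab _ _ => False

/-- Free (individual) variables. -/
def freeVars : SCLFormula V → Finset ℕ
  | .bot => ∅
  | .eq x y => {x, y}
  | .rel _ a => Finset.image a Finset.univ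
  | .claim _ => ∅
  | .not φ => freeVars φ
  | .and φ ψ => freeVars φ ∪ freeVars ψ
  | .or φ ψ => freeVars φ ∪ freeVars ψ
  | .ex x φ => freeVars φ \ {x}
  | .all x φ => freeVars φ \ {x}
  | .lab _ φ => freeVars φ

/-- All variables occurring in a formula (free or bound). -/
def vars : SCLFormula V → Finset ℕ
  | .bot => ∅
  | .eq x y => {x, y}
  | .rel _ a => Finset.image a Finset.univ
  | .claim _ => ∅
  | .not φ => vars φ
  | .and φ ψ => vars φ ∪ vars ψ
  | .or φ ψ => vars φ ∪ vars ψ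
  | .ex x φ => insert x (vars φ)
  | .all x φ => insert x (vars φ)
  | .lab _ φ => vars φ

/-- Sentences: formulas with no free variables. -/
def IsSentence (φ : SCLFormula V) : Prop := freeVars φ = ∅

end SCLFormula

/-! ## Structures and first-order (Tarski) satisfaction -/

/-- A (suitable) model for vocabulary `V`: a nonempty domain together with an
interpretation of all relation symbols. -/
structure Struct (V : Vocab) where
  Dom : Type u
  dom_nonempty : Nonempty Dom
  interp : ∀ R : V.Rel, (Fin (V.arity R) → Dom) → Prop

attribute [instance] Struct.dom_nonempty

/-- Satisfaction of atoms (false on non-atoms). -/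
def atomSat {V : Vocab} (M : Struct.{u} V) (s : ℕ → M.Dom) : SCLFormula V → Prop
  | .bot => False
  | .eq x y => s x = s y
  | .rel R a => M.interp R fun i => s (a i)
  | _ => False

/-- Standard (Tarski) first-order satisfaction.  It is only meaningful on
purely first-order formulas; claim symbols are interpreted as `False` and
label symbols are ignored. -/
def FOSat {V : Vocab} (M : Struct.{u} V) : (ℕ → M.Dom) → SCLFormula V → Prop
  | _, .bot => False
  | s, .eq x y => s x = s y
  | s, .rel R a => M.interp R fun i => s (a i)
  | _, .claim _ => False
  | s, .not φ => ¬ FOSat M s φ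
  | s, .and φ ψ => FOSat M s φ ∧ FOSat M s ψ
  | s, .or φ ψ => FOSat M s φ ∨ FOSat M s ψ
  | s, .ex x φ => ∃ a : M.Dom, FOSat M (Function.update s x a) φ
  | s, .all x φ => ∀ a : M.Dom, FOSat M (Function.update s x a) φ
  | s, .lab _ φ => FOSat M s φ

/-! ## The evaluation games -/

/-- A position of the semantic game: the current formula, the environment
recording for each label symbol `L` the reference formula `L ψ` it currently
names, the current assignment, and the polarity (`true` = `+`). -/
structure SCLPos (V : Vocab) (D : Type u) : Type u where
  form : SCLFormula V
  env : ℕ → Option (SCLFormula V)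
  asg : ℕ → D
  pol : Bool

/-- Which player moves at a given position. (At positions with at most one
successor the owner is irrelevant; we let Eloise own them.) -/
def posTurn {V : Vocab} {D : Type u} (p : SCLPos V D) : Player :=
  match p.form, p.pol with
  | .and _ _, true => .abelard
  | .and _ _, false => .eloise
  | .or _ _, true => .eloise
  | .or _ _, false => .abelard
  | .all _ _, true => .abelard
  | .all _ _, false => .eloise
  | .ex _ _, true => .eloise
  | .ex _ _, false => .abelard
  | _, _ => .eloise

/-- Who wins a play ending at a given position: at an FO-atom position,
Eloise wins iff the atom's truth value agrees with the polarity, and Abelard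
wins otherwise; plays ending anywhere else (e.g. at a claim symbol with no
reference formula, or with clock value 0) are won by neither player. -/
def posWin {V : Vocab} (M : Struct.{u} V) (p : SCLPos V M.Dom) : Player → Prop
  | .eloise => p.form.IsFOAtom ∧ (atomSat M p.asg p.form ↔ p.pol = true)
  | .abelard => p.form.IsFOAtom ∧ ¬ (atomSat M p.asg p.form ↔ p.pol = true)

/-- Moves of the unbounded evaluation game `G_∞`. -/
inductive UStep {V : Vocab} (M : Struct.{u} V) :
    SCLPos V M.Dom → SCLPos V M.Dom → Prop
  | neg (φ : SCLFormula V) (e : ℕ → Option (SCLFormula V)) (s : ℕ → M.Dom) (b : Bool) :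
      UStep M ⟨.not φ, e, s, b⟩ ⟨φ, e, s, !b⟩
  | andLeft (φ ψ : SCLFormula V) (e : ℕ → Option (SCLFormula V)) (s : ℕ → M.Dom) (b : Bool) :
      UStep M ⟨.and φ ψ, e, s, b⟩ ⟨φ, e, s, b⟩
  | andRight (φ ψ : SCLFormula V) (e : ℕ → Option (SCLFormula V)) (s : ℕ → M.Dom) (b : Bool) :
      UStep M ⟨.and φ ψ, e, s, b⟩ ⟨ψ, e, s, b⟩
  | orLeft (φ ψ : SCLFormula V) (e : ℕ → Option (SCLFormula V)) (s : ℕ → M.Dom) (b : Bool) :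
      UStep M ⟨.or φ ψ, e, s, b⟩ ⟨φ, e, s, b⟩
  | orRight (φ ψ : SCLFormula V) (e : ℕ → Option (SCLFormula V)) (s : ℕ → M.Dom) (b : Bool) :
      UStep M ⟨.or φ ψ, e, s, b⟩ ⟨ψ, e, s, b⟩
  | exStep (x : ℕ) (φ : SCLFormula V) (e : ℕ → Option (SCLFormula V)) (s : ℕ → M.Dom)
      (b : Bool) (a : M.Dom) :
      UStep M ⟨.ex x φ, e, s, b⟩ ⟨φ, e, Function.update s x a, b⟩
  | allStep (x : ℕ) (φ : SCLFormula V) (e : ℕ → Option (SCLFormula V)) (s : ℕ → M.Dom)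
      (b : Bool) (a : M.Dom) :
      UStep M ⟨.all x φ, e, s, b⟩ ⟨φ, e, Function.update s x a, b⟩
  | labStep (L : ℕ) (φ : SCLFormula V) (e : ℕ → Option (SCLFormula V)) (s : ℕ → M.Dom)
      (b : Bool) :
      UStep M ⟨.lab L φ, e, s, b⟩ ⟨φ, Function.update e L (some (.lab L φ)), s, b⟩
  | claimStep (L : ℕ) (e : ℕ → Option (SCLFormula V)) (s : ℕ → M.Dom) (b : Bool)
      (χ : SCLFormula V) (h : e L = some χ) :
      UStep M ⟨.claim L, e, s, b⟩ ⟨χ, e, s, b⟩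

/-- Moves of the `n`-bounded evaluation game: positions additionally carry a
clock value, which decreases by one exactly at jumps from a claim symbol to
its reference formula; a claim-symbol position with clock value `0` is a dead
end won by neither player. -/
inductive BStep {V : Vocab} (M : Struct.{u} V) :
    SCLPos V M.Dom × ℕ → SCLPos V M.Dom × ℕ → Prop
  | neg (φ : SCLFormula V) (e : ℕ → Option (SCLFormula V)) (s : ℕ → M.Dom) (b : Bool) (n : ℕ) :
      BStep M (⟨.not φ, e, s, b⟩, n) (⟨φ, e, s, !b⟩, n)
  | andLeft (φ ψ : SCLFormula V) (e : ℕ → Option (SCLFormula V)) (s : ℕ → M.Dom) (b : Bool)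
      (n : ℕ) : BStep M (⟨.and φ ψ, e, s, b⟩, n) (⟨φ, e, s, b⟩, n)
  | andRight (φ ψ : SCLFormula V) (e : ℕ → Option (SCLFormula V)) (s : ℕ → M.Dom) (b : Bool)
      (n : ℕ) : BStep M (⟨.and φ ψ, e, s, b⟩, n) (⟨ψ, e, s, b⟩, n)
  | orLeft (φ ψ : SCLFormula V) (e : ℕ → Option (SCLFormula V)) (s : ℕ → M.Dom) (b : Bool)
      (n : ℕ) : BStep M (⟨.or φ ψ, e, s, b⟩, n) (⟨φ, e, s, b⟩, n)
  | orRight (φ ψ : SCLFormula V) (e : ℕ → Option (SCLFormula V)) (s : ℕ → M.Dom) (b : Bool)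
      (n : ℕ) : BStep M (⟨.or φ ψ, e, s, b⟩, n) (⟨ψ, e, s, b⟩, n)
  | exStep (x : ℕ) (φ : SCLFormula V) (e : ℕ → Option (SCLFormula V)) (s : ℕ → M.Dom)
      (b : Bool) (n : ℕ) (a : M.Dom) :
      BStep M (⟨.ex x φ, e, s, b⟩, n) (⟨φ, e, Function.update s x a, b⟩, n)
  | allStep (x : ℕ) (φ : SCLFormula V) (e : ℕ → Option (SCLFormula V)) (s : ℕ → M.Dom)
      (b : Bool) (n : ℕ) (a : M.Dom) :
      BStep M (⟨.all x φ, e, s, b⟩, n) (⟨φ, e, Function.update s x a, b⟩, n)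
  | labStep (L : ℕ) (φ : SCLFormula V) (e : ℕ → Option (SCLFormula V)) (s : ℕ → M.Dom)
      (b : Bool) (n : ℕ) :
      BStep M (⟨.lab L φ, e, s, b⟩, n) (⟨φ, Function.update e L (some (.lab L φ)), s, b⟩, n)
  | claimStep (L : ℕ) (e : ℕ → Option (SCLFormula V)) (s : ℕ → M.Dom) (b : Bool)
      (χ : SCLFormula V) (n : ℕ) (h : e L = some χ) :
      BStep M (⟨.claim L, e, s, b⟩, n + 1) (⟨χ, e, s, b⟩, n)

/-- The unbounded evaluation game `G_∞(𝔄, ·, ·)` as a game arena. -/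
def gameU {V : Vocab} (M : Struct.{u} V) : GameArena (SCLPos V M.Dom) where
  turn := posTurn
  edge := UStep M
  win := posWin M

/-- The bounded evaluation games `G_n(𝔄, ·, ·)` (for all clock values `n`
simultaneously) as a game arena. -/
def gameB {V : Vocab} (M : Struct.{u} V) : GameArena (SCLPos V M.Dom × ℕ) where
  turn p := posTurn p.1
  edge := BStep M
  win p := posWin M p.1

/-- The initial position of the evaluation game for `φ` under assignment `s`:
empty environment and positive polarity. -/
def initPos {V : Vocab} {D : Type u} (φ : SCLFormula V) (s : ℕ → D) : SCLPos V D :=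
  ⟨φ, fun _ => none, s, true⟩

/-- Truth under the unbounded semantics (the logic SCL):
`𝔄,s ⊨ φ` iff Eloise has a winning strategy in `G_∞(𝔄,s,φ)`. -/
def SCLTrue {V : Vocab} (M : Struct.{u} V) (s : ℕ → M.Dom) (φ : SCLFormula V) : Prop :=
  (gameU M).HasWinningStrategy .eloise (initPos φ s)

/-! ### The bounded game `G_ω` -/

/-- Positions of the game `G_ω`: the initial position (where Abelard picks a
number `n'`), the intermediate positions (where Eloise picks some `n ≥ n'`),
and the positions of the `n`-bounded games. -/
inductive GOPos (V : Vocab) (D : Type u) : Type u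
  | start : GOPos V D
  | mid (n' : ℕ) : GOPos V D
  | inner (p : SCLPos V D) (clock : ℕ) : GOPos V D

inductive GOStep {V : Vocab} (M : Struct.{u} V) (φ : SCLFormula V) (s : ℕ → M.Dom) :
    GOPos V M.Dom → GOPos V M.Dom → Prop
  | abelardPick (n' : ℕ) : GOStep M φ s .start (.mid n')
  | eloisePick (n' n : ℕ) (h : n' ≤ n) : GOStep M φ s (.mid n') (.inner (initPos φ s) n)
  | play (p q : SCLPos V M.Dom) (m k : ℕ) (h : BStep M (p, m) (q, k)) :
      GOStep M φ s (.inner p m) (.inner q k)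

def goTurn {V : Vocab} {D : Type u} : GOPos V D → Player
  | .start => .abelard
  | .mid _ => .eloise
  | .inner p _ => posTurn p

def goWin {V : Vocab} (M : Struct.{u} V) : GOPos V M.Dom → Player → Prop
  | .inner p _, pl => posWin M p pl
  | _, _ => False

/-- The bounded evaluation game `G_ω(𝔄,s,φ)`: Abelard picks `n' ∈ ℕ`, then
Eloise picks `n ≥ n'`, and then `G_n(𝔄,s,φ)` is played. -/
def gameOmega {V : Vocab} (M : Struct.{u} V) (φ : SCLFormula V) (s : ℕ → M.Dom) :
    GameArena (GOPos V M.Dom) where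
  turn := goTurn
  edge := GOStep M φ s
  win := goWin M

/-- Truth under the bounded semantics (the logic BndSCL):
`𝔄,s ⊨_ω φ` iff Eloise has a winning strategy in `G_ω(𝔄,s,φ)`. -/
def BndTrue {V : Vocab} (M : Struct.{u} V) (s : ℕ → M.Dom) (φ : SCLFormula V) : Prop :=
  (gameOmega M φ s).HasWinningStrategy .eloise .start

/-! ## Approximants -/

/-- Auxiliary structural recursion for approximants: `k` tells what to put in
place of a claim symbol.  Label symbols are deleted (while updating the
environment), and polarity is tracked through negations. -/
def approxCore {V : Vocab}
    (k : (ℕ → Option (SCLFormula V)) → Bool → ℕ → SCLFormula V) :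
    (ℕ → Option (SCLFormula V)) → Bool → SCLFormula V → SCLFormula V
  | _, _, .bot => .bot
  | _, _, .eq x y => .eq x y
  | _, _, .rel R a => .rel R a
  | e, b, .claim L => k e b L
  | e, b, .not φ => .not (approxCore k e (!b) φ)
  | e, b, .and φ ψ => .and (approxCore k e b φ) (approxCore k e b ψ)
  | e, b, .or φ ψ => .or (approxCore k e b φ) (approxCore k e b ψ)
  | e, b, .ex x φ => .ex x (approxCore k e b φ)
  | e, b, .all x φ => .all x (approxCore k e b φ)
  | e, b, .lab L φ => approxCore k (Function.update e L (some (.lab L φ))) b φ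

/-- `approx n e b φ` unfolds each claim symbol of `φ` (in environment `e`,
under polarity `b`) through `n` jumps to reference formulas; claim symbols
reached with exhausted budget (or with no reference formula) are replaced by
`⊥` at positive occurrences and `⊤` (i.e. `¬⊥`) at negative occurrences, and
all label symbols are deleted. -/
def approx {V : Vocab} : ℕ → (ℕ → Option (SCLFormula V)) → Bool → SCLFormula V → SCLFormula V
  | 0 => approxCore fun _ b _ => if b then .bot else .not .bot
  | n + 1 => approxCore fun e b L =>
      match e L with
      | some χ => approx n e b χ
      | none => if b then .bot else .not .bot

/-- The `n`-th approximant `Φⁿ_φ` of `φ`: the first-order formula obtained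
from the `n`-th unfolding of `φ` by deleting all label symbols and replacing
positive claim occurrences by `⊥` and negative ones by `⊤`. -/
def approximant {V : Vocab} (φ : SCLFormula V) (n : ℕ) : SCLFormula V :=
  approx n (fun _ => none) true φ

/-! ## Directed graphs as structures over one binary relation symbol -/

/-- The vocabulary with a single binary relation symbol. -/
abbrev binVocab : Vocab := ⟨Unit, fun _ => 2⟩

/-- The edge relation of a `binVocab`-structure. -/
def Edge (M : Struct.{u} binVocab) (a b : M.Dom) : Prop :=
  M.interp Unit.unit (fun i => if i.val = 0 then a else b)

/-- The atomic formula `E x y` (for variables `x`, `y`). -/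
def Eform (x y : ℕ) : SCLFormula binVocab :=
  .rel Unit.unit (fun i => if i.val = 0 then x else y)

/-- The sentence `∃x∃y(x = y ∧ L(Eyx ∨ ∃z(Eyz ∧ ∃y(y = z ∧ C_L))))`,
with `x = 0`, `y = 1`, `z = 2` and label symbol `L = 0`. -/
def phiCycle : SCLFormula binVocab :=
  .ex 0 (.ex 1 (.and (.eq 0 1)
    (.lab 0 (.or (Eform 1 0)
      (.ex 2 (.and (Eform 1 2) (.ex 1 (.and (.eq 1 2) (.claim 0)))))))))

/-- The sentence `∀x∀y(x = y ∨ L(Exy ∨ ∃z(Exz ∧ ∃x(x = z ∧ C_L))))`,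
with `x = 0`, `y = 1`, `z = 2` and label symbol `L = 0`. -/
def phiDiam : SCLFormula binVocab :=
  .all 0 (.all 1 (.or (.eq 0 1)
    (.lab 0 (.or (Eform 0 1)
      (.ex 2 (.and (Eform 0 2) (.ex 0 (.and (.eq 0 2) (.claim 0)))))))))

/-- The directed graph `M` contains a cycle: a sequence `u₀, …, uₙ` with
`n ≥ 1` (i.e. more than one entry), consecutive edges, `u₀ = uₙ`, and with
`u₀, …, u_{n-1}` pairwise distinct. -/
def HasCycle (M : Struct.{u} binVocab) : Prop :=
  ∃ (n : ℕ) (f : ℕ → M.Dom), 1 ≤ n ∧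
    (∀ i, i < n → Edge M (f i) (f (i + 1))) ∧
    f 0 = f n ∧
    (∀ i j, i < n → j < n → i ≠ j → f i ≠ f j)

/-- There is a directed walk of length at most `n` from `u` to `v`,
i.e. the directed distance `d(u,v)` is at most `n`. -/
def ReachIn (M : Struct.{u} binVocab) (u v : M.Dom) (n : ℕ) : Prop :=
  ∃ (m : ℕ) (f : ℕ → M.Dom), m ≤ n ∧ f 0 = u ∧ f m = v ∧
    ∀ i, i < m → Edge M (f i) (f (i + 1))

/-- The directed graph `M` has finite diameter: `sup {d(u,v) | u,v} < ∞`. -/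
def FiniteDiameter (M : Struct.{u} binVocab) : Prop :=
  ∃ n : ℕ, ∀ u v : M.Dom, ReachIn M u v n


/-! ## Framework: generic lemmas about winning strategies -/

section Framework

variable {P : Type u} (A : GameArena P)

private lemma list_getLast?_cons {v : P} {w : List P} (hw : w ≠ []) :
    (v :: w).getLast? = w.getLast? := by
  cases w with
  | nil => exact absurd rfl hw
  | cons a l => simp [List.getLast?_cons_cons]

/-- From a winning strategy at a dead end we get a win. -/
theorem HWS_deadend {pl : Player} {v : P}
    (h : A.HasWinningStrategy pl v) (hd : A.DeadEnd v) : A.win v pl := by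
  obtain ⟨σ, _, hfin, _⟩ := h
  have hplay : A.IsFinitePlay v [v] := by
    refine ⟨⟨rfl, List.isChain_singleton v⟩, ?_⟩
    intro u hu
    simp only [List.getLast?_singleton, Option.some.injEq] at hu
    subst hu; exact hd
  have hfol : A.FollowsFin pl σ [v] := by
    intro q u x hpre hq _
    exfalso
    have hlen := hpre.length_le
    simp at hlen
    have : q = [] := by
      rcases q with _ | ⟨a, l⟩
      · rfl
      · simp at hlen
    subst this; simp at hq
  obtain ⟨u, hu, hwin⟩ := hfin [v] hplay hfol
  simp only [List.getLast?_singleton, Option.some.injEq] at hu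
  subst hu; exact hwin

/-- Shifting a winning strategy one step along a consistent edge. -/
theorem WinningStrategy.step {σ : List P → P} {v x : P} {pl : Player}
    (h : A.WinningStrategy pl v σ) (hx : A.edge v x)
    (hcons : A.turn v = pl → x = σ [v]) :
    A.WinningStrategy pl x (fun q => σ (v :: q)) := by
  obtain ⟨hleg, hfin, hinf⟩ := h
  have hwalk : ∀ w : List P, A.IsWalkFrom x w → A.IsWalkFrom v (v :: w) := by
    rintro w ⟨hw1, hw2⟩
    refine ⟨rfl, ?_⟩
    change List.IsChain A.edge (v :: w)
    rw [List.isChain_cons]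
    refine ⟨?_, hw2⟩
    intro y hy
    rcases w with _ | ⟨a, l⟩
    · simp at hw1
    · simp only [List.head?_cons, Option.mem_def, Option.some.injEq] at hy hw1
      subst hy; rw [← hw1] at hx; exact hx
  have hne : ∀ w : List P, A.IsWalkFrom x w → w ≠ [] := by
    rintro w ⟨hw1, _⟩ hn; subst hn; simp at hw1
  have hfolcons : ∀ w, A.IsWalkFrom x w →
      A.FollowsFin pl (fun q => σ (v :: q)) w → A.FollowsFin pl σ (v :: w) := by
    intro w hwW hfw q u y hpre hq ht
    rcases q with _ | ⟨a, q'⟩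
    · simp at hq
    · rw [List.cons_append] at hpre
      rw [List.cons_prefix_cons] at hpre
      obtain ⟨rfl, hpre'⟩ := hpre
      rcases q' with _ | ⟨b, q''⟩
      · -- q = [v], so u = v, y = head of w = x
        simp only [List.getLast?_singleton, Option.some.injEq] at hq
        subst hq
        have : y = x := by
          rcases w with _ | ⟨c, l⟩
          · simp at hpre'
          · simp only [List.nil_append] at hpre'
            rw [List.cons_prefix_cons] at hpre'
            obtain ⟨rfl, _⟩ := hpre'
            obtain ⟨hw1, _⟩ := hwW
            have h3 := hw1
            simp only [List.head?_cons, Option.some.injEq] at h3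
            exact h3
        subst this
        exact hcons ht
      · have hq' : (b :: q'').getLast? = some u := by
          rw [list_getLast?_cons (by simp)] at hq; exact hq
        exact hfw (b :: q'') u y hpre' hq' ht
  refine ⟨?_, ?_, ?_⟩
  · intro w u hw hlast ht hex
    have := hleg (v :: w) u (hwalk w hw) ?_ ht hex
    · exact this
    · rw [list_getLast?_cons (hne w hw)]; exact hlast
  · rintro w ⟨hwW, hdead⟩ hfol
    have hplay : A.IsFinitePlay v (v :: w) := by
      refine ⟨hwalk w hwW, ?_⟩
      intro u hu
      rw [list_getLast?_cons (hne w hwW)] at hu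
      exact hdead u hu
    obtain ⟨u, hu, hwin⟩ := hfin (v :: w) hplay (hfolcons w hwW hfol)
    rw [list_getLast?_cons (hne w hwW)] at hu
    exact ⟨u, hu, hwin⟩
  · intro f hf hfol
    refine hinf (fun n => Nat.rec v (fun k _ => f k) n) ⟨rfl, ?_⟩ ?_
    · intro n
      cases n with
      | zero => simpa [hf.1] using hx
      | succ m => exact hf.2 m
    · intro n ht
      cases n with
      | zero =>
        show f 0 = _
        rw [hf.1]
        have h1 : x = σ [v] := hcons ht
        have h2 : (List.ofFn fun i : Fin 1 => Nat.rec v (fun k _ => f k) i.val) = [v] := by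
          simp [List.ofFn_succ]
        rw [h2]; exact h1
      | succ m =>
        show f (m + 1) = _
        have h1 := hfol m ht
        have h2 : (List.ofFn fun i : Fin (m + 2) => Nat.rec v (fun k _ => f k) i.val)
            = v :: List.ofFn fun i : Fin (m + 1) => f i.val := by
          rw [List.ofFn_succ]; rfl
        rw [h2]; exact h1



theorem HWS_eloise_step {v : P} (h : A.HasWinningStrategy .eloise v)
    (ht : A.turn v = .eloise) (hex : ∃ x, A.edge v x) :
    ∃ x, A.edge v x ∧ A.HasWinningStrategy .eloise x := by
  obtain ⟨σ, hσ⟩ := h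
  have hxw : A.IsWalkFrom v [v] := ⟨rfl, List.isChain_singleton v⟩
  have hedge : A.edge v (σ [v]) := hσ.1 [v] v hxw (by simp) ht hex
  exact ⟨σ [v], hedge, ⟨_, WinningStrategy.step A hσ hedge (fun _ => rfl)⟩⟩

theorem HWS_abelard_step {v x : P} (h : A.HasWinningStrategy .eloise v)
    (ht : A.turn v = .abelard) (hx : A.edge v x) :
    A.HasWinningStrategy .eloise x := by
  obtain ⟨σ, hσ⟩ := h
  exact ⟨_, WinningStrategy.step A hσ hx (fun he => by rw [ht] at he; cases he)⟩

private lemma snoc_getLast? (l : List P) (a : P) : (l ++ [a]).getLast? = some a := by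
  rw [List.getLast?_append_of_ne_nil _ (by simp)]
  rfl

/-- Building a winning strategy from a positional strategy with an invariant. -/
theorem winning_of_invariant (v : P) (F : P → P) (Inv : P → Prop)
    (hNoInf : ∀ f, ¬ A.IsInfPlay v f)
    (hv : Inv v)
    (hdead : ∀ u, Inv u → A.DeadEnd u → A.win u .eloise)
    (habel : ∀ u x, Inv u → A.turn u = .abelard → A.edge u x → Inv x)
    (helo : ∀ u, Inv u → A.turn u = .eloise → ¬ A.DeadEnd u → Inv (F u))
    (hleg : ∀ u, A.turn u = .eloise → (∃ x, A.edge u x) → A.edge u (F u)) :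
    A.HasWinningStrategy .eloise v := by
  classical
  refine ⟨fun w => F (w.getLast?.getD v), ?_, ?_, ?_⟩
  · intro w u hw hlast ht hex
    show A.edge u (F (w.getLast?.getD v))
    rw [hlast]
    exact hleg u ht hex
  · rintro w ⟨hwW, hdeadw⟩ hfol
    have key : ∀ q : List P, q <+: w → ∀ z, q.getLast? = some z → Inv z := by
      intro q
      induction q using List.reverseRecOn with
      | nil => intro _ z hz; simp at hz
      | append_singleton q' x ih =>
        intro hpre z hz
        rw [snoc_getLast?] at hz
        have hzx : z = x := by injection hz with h; exact h.symm
        subst hzx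
        rcases List.eq_nil_or_concat q' with hq' | ⟨q'', y, hq'⟩
        · subst hq'
          -- q = [z]; z is the head of w, which is v
          have hh : w.head? = some z := by
            rcases w with _ | ⟨a, l⟩
            · simp at hpre
            · simp only [List.nil_append] at hpre
              rw [List.cons_prefix_cons] at hpre
              simp [hpre.1]
          rw [hwW.1] at hh
          have : v = z := Option.some.inj hh
          rw [← this]; exact hv
        · rw [List.concat_eq_append] at hq'
          subst hq'
          have hq'pre : (q'' ++ [y]) <+: w :=
            ((q'' ++ [y]).prefix_append [z]).trans hpre
          have hInvy : Inv y := ih hq'pre y (snoc_getLast? q'' y)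
          have hchain : List.Chain' A.edge ((q'' ++ [y]) ++ [z]) :=
            hwW.2.prefix hpre
          have hedge : A.edge y z := by
            change List.IsChain A.edge _ at hchain
            rw [List.isChain_append] at hchain
            exact hchain.2.2 y (by rw [snoc_getLast?]; rfl) z rfl
          cases hturn : A.turn y with
          | abelard => exact habel y z hInvy hturn hedge
          | eloise =>
            have hz' : z = F ((q'' ++ [y]).getLast?.getD v) :=
              hfol (q'' ++ [y]) y z hpre (snoc_getLast? q'' y) hturn
            rw [snoc_getLast?] at hz'
            rw [hz']
            exact helo y hInvy hturn (fun hd => hd z hedge)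
    obtain ⟨z, hz⟩ : ∃ z, w.getLast? = some z := by
      rcases w with _ | ⟨a, l⟩
      · exfalso; have := hwW.1; simp at this
      · exact ⟨_, List.getLast?_eq_getLast (by simp)⟩
    exact ⟨z, hz, hdead z (key w (List.prefix_refl w) z hz) (hdeadw z hz)⟩
  · intro f hf _
    exact hNoInf f hf

end Framework

/-! ## No infinite plays in the bounded games -/

private lemma no_strict_desc (a : ℕ → ℕ) (h : ∀ n, a (n + 1) < a n) : False := by
  have key : ∀ n, a n + n ≤ a 0 := by
    intro n
    induction n with
    | zero => omega
    | succ m ih => have := h m; omega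
  have := key (a 0 + 1); omega

lemma BStep.down {V : Vocab} {M : Struct.{u} V} {x y : SCLPos V M.Dom × ℕ}
    (h : BStep M x y) :
    y.2 < x.2 ∨ (y.2 = x.2 ∧ sizeOf y.1.form < sizeOf x.1.form) := by
  cases h <;> simp <;> omega

lemma noInfB {V : Vocab} (M : Struct.{u} V) (g : ℕ → SCLPos V M.Dom × ℕ)
    (hg : ∀ n, BStep M (g n) (g (n + 1))) : False := by
  classical
  suffices h : ∀ B (g : ℕ → SCLPos V M.Dom × ℕ), (g 0).2 ≤ B →
      (∀ n, BStep M (g n) (g (n + 1))) → False from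
    h ((g 0).2) g le_rfl hg
  intro B
  induction B with
  | zero =>
    intro g hB hg
    have hmono : ∀ n, (g n).2 = 0 := by
      intro n
      induction n with
      | zero => omega
      | succ m ih =>
        rcases BStep.down (hg m) with h1 | h1 <;> omega
    apply no_strict_desc (fun n => sizeOf (g n).1.form)
    intro n
    rcases BStep.down (hg n) with h1 | h1
    · have := hmono n; have := hmono (n + 1); omega
    · exact h1.2
  | succ B ih =>
    intro g hB hg
    by_cases hex : ∃ n, (g n).2 < (g 0).2
    · obtain ⟨n, hn⟩ := hex
      refine ih (fun k => g (n + k)) ?_ (fun k => by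
        show BStep M (g (n + k)) (g (n + (k + 1)))
        rw [show n + (k + 1) = (n + k) + 1 from by omega]; exact hg (n + k))
      show (g (n + 0)).2 ≤ B
      rw [Nat.add_zero]; omega
    · push_neg at hex
      have hle : ∀ m, (g m).2 ≤ (g 0).2 := by
        intro m
        induction m with
        | zero => exact le_rfl
        | succ k ihk =>
          rcases BStep.down (hg k) with h1 | h1 <;> omega
      have heq : ∀ n, (g n).2 = (g 0).2 := fun n => le_antisymm (hle n) (hex n)
      apply no_strict_desc (fun n => sizeOf (g n).1.form)
      intro n
      rcases BStep.down (hg n) with h1 | h1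
      · have := heq n; have := heq (n + 1); omega
      · exact h1.2

lemma GOStep.cases' {V : Vocab} {M : Struct.{u} V} {φ : SCLFormula V} {s : ℕ → M.Dom}
    {x y : GOPos V M.Dom} (h : GOStep M φ s x y) :
    (∃ n', x = .start ∧ y = .mid n') ∨
    (∃ n' n, n' ≤ n ∧ x = .mid n' ∧ y = .inner (initPos φ s) n) ∨
    (∃ p q m k, x = .inner p m ∧ y = .inner q k ∧ BStep M (p, m) (q, k)) := by
  cases h with
  | abelardPick n' => exact Or.inl ⟨n', rfl, rfl⟩
  | eloisePick n' n hn => exact Or.inr (Or.inl ⟨n', n, hn, rfl, rfl⟩)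
  | play p q m k hb => exact Or.inr (Or.inr ⟨p, q, m, k, rfl, rfl, hb⟩)

lemma noInfOmega {V : Vocab} (M : Struct.{u} V) (φ : SCLFormula V) (s : ℕ → M.Dom)
    (p : GOPos V M.Dom) (f : ℕ → GOPos V M.Dom) :
    ¬ (gameOmega M φ s).IsInfPlay p f := by
  rintro ⟨h0, hstep⟩
  have inner_step : ∀ n q c, f n = .inner q c → ∃ q' c', f (n + 1) = .inner q' c' := by
    intro n q c hq
    rcases GOStep.cases' (hstep n) with ⟨n', h1, h2⟩ | ⟨n', m, _, h1, h2⟩ | ⟨p', q', m, k, h1, h2, _⟩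
    · rw [hq] at h1; cases h1
    · rw [hq] at h1; cases h1
    · exact ⟨q', k, h2⟩
  have key : ∀ n, ∃ q c, f (n + 2) = .inner q c := by
    intro n
    induction n with
    | zero =>
      rcases GOStep.cases' (hstep 0) with ⟨n', h1, h2⟩ | ⟨n', m, _, h1, h2⟩ | ⟨p', q', m, k, h1, h2, _⟩
      · -- f 1 = mid n'
        rcases GOStep.cases' (hstep 1) with ⟨n2, g1, g2⟩ | ⟨n2, m2, _, g1, g2⟩ | ⟨p2, q2, m2, k2, g1, g2, _⟩
        · rw [h2] at g1; cases g1
        · exact ⟨_, _, g2⟩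
        · rw [h2] at g1; cases g1
      · exact inner_step 1 _ _ h2
      · exact inner_step 1 _ _ h2
    | succ m ihm =>
      obtain ⟨q, c, hqc⟩ := ihm
      exact inner_step (m + 2) q c hqc
  classical
  apply noInfB M (fun n => match f (n + 2) with
    | .inner q c => (q, c)
    | _ => (⟨.bot, fun _ => none, s, true⟩, 0))
  intro n
  obtain ⟨q, c, hqc⟩ := key n
  obtain ⟨q', c', hqc'⟩ := key (n + 1)
  rw [show n + 1 + 2 = n + 2 + 1 from rfl] at hqc'
  rcases GOStep.cases' (hstep (n + 2)) with ⟨n', h1, h2⟩ | ⟨n', m, _, h1, h2⟩ | ⟨p', q2, m, k, h1, h2, hb⟩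
  · rw [hqc] at h1; cases h1
  · rw [hqc] at h1; cases h1
  · rw [hqc] at h1
    rw [hqc'] at h2
    injection h1 with e1 e2
    injection h2 with e3 e4
    subst e1; subst e2; subst e3; subst e4
    simp only [hqc, hqc']
    exact hb

/-! ## Shape lemmas for the bounded evaluation games -/

section Shapes

variable {V : Vocab} {M : Struct.{u} V}

lemma GOedge_inner {φ0 : SCLFormula V} {s0 : ℕ → M.Dom} {p : SCLPos V M.Dom} {c : ℕ}
    {y : GOPos V M.Dom} (h : GOStep M φ0 s0 (.inner p c) y) :
    ∃ q k, y = .inner q k ∧ BStep M (p, c) (q, k) := by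
  rcases GOStep.cases' h with ⟨n', h1, h2⟩ | ⟨n', n, _, h1, h2⟩ | ⟨p', q, m, k, h1, h2, hb⟩
  · cases h1
  · cases h1
  · injection h1 with e1 e2; subst e1; subst e2; exact ⟨q, k, h2, hb⟩

variable {e : ℕ → Option (SCLFormula V)} {s : ℕ → M.Dom} {b : Bool} {n : ℕ}
  {X : SCLPos V M.Dom × ℕ}

lemma BStep.inv_or {φ ψ : SCLFormula V} (h : BStep M (⟨.or φ ψ, e, s, b⟩, n) X) :
    X = (⟨φ, e, s, b⟩, n) ∨ X = (⟨ψ, e, s, b⟩, n) := by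
  cases h
  · exact Or.inl rfl
  · exact Or.inr rfl

lemma BStep.inv_and {φ ψ : SCLFormula V} (h : BStep M (⟨.and φ ψ, e, s, b⟩, n) X) :
    X = (⟨φ, e, s, b⟩, n) ∨ X = (⟨ψ, e, s, b⟩, n) := by
  cases h
  · exact Or.inl rfl
  · exact Or.inr rfl

lemma BStep.inv_ex {x : ℕ} {φ : SCLFormula V} (h : BStep M (⟨.ex x φ, e, s, b⟩, n) X) :
    ∃ a : M.Dom, X = (⟨φ, e, Function.update s x a, b⟩, n) := by
  cases h with
  | exStep _ _ _ _ _ _ a => exact ⟨a, rfl⟩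

lemma BStep.inv_all {x : ℕ} {φ : SCLFormula V} (h : BStep M (⟨.all x φ, e, s, b⟩, n) X) :
    ∃ a : M.Dom, X = (⟨φ, e, Function.update s x a, b⟩, n) := by
  cases h with
  | allStep _ _ _ _ _ _ a => exact ⟨a, rfl⟩

lemma BStep.inv_lab {L : ℕ} {φ : SCLFormula V} (h : BStep M (⟨.lab L φ, e, s, b⟩, n) X) :
    X = (⟨φ, Function.update e L (some (.lab L φ)), s, b⟩, n) := by
  cases h; rfl

lemma BStep.inv_claim {L : ℕ} (h : BStep M (⟨.claim L, e, s, b⟩, n) X) :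
    ∃ χ n', n = n' + 1 ∧ e L = some χ ∧ X = (⟨χ, e, s, b⟩, n') := by
  cases h with
  | claimStep _ _ _ _ χ n' hχ => exact ⟨χ, n', rfl, hχ, rfl⟩

lemma BStep.inv_not {φ : SCLFormula V} (h : BStep M (⟨.not φ, e, s, b⟩, n) X) :
    X = (⟨φ, e, s, !b⟩, n) := by
  cases h; rfl

-- Dead ends
lemma deadEnd_rel {φ0 : SCLFormula V} {s0 : ℕ → M.Dom} {R : V.Rel} {a} :
    (gameOmega M φ0 s0).DeadEnd (.inner ⟨.rel R a, e, s, b⟩ n) := by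
  intro x hx
  obtain ⟨q, k, _, hb⟩ := GOedge_inner hx
  cases hb

lemma deadEnd_eq {φ0 : SCLFormula V} {s0 : ℕ → M.Dom} {i j : ℕ} :
    (gameOmega M φ0 s0).DeadEnd (.inner ⟨.eq i j, e, s, b⟩ n) := by
  intro x hx
  obtain ⟨q, k, _, hb⟩ := GOedge_inner hx
  cases hb

lemma deadEnd_claim_zero {φ0 : SCLFormula V} {s0 : ℕ → M.Dom} {L : ℕ} :
    (gameOmega M φ0 s0).DeadEnd (.inner ⟨.claim L, e, s, b⟩ 0) := by
  intro x hx
  obtain ⟨q, k, _, hb⟩ := GOedge_inner hx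
  obtain ⟨χ, n', hn, _, _⟩ := BStep.inv_claim hb
  cases hn

lemma win_eq_true {φ0 : SCLFormula V} {s0 : ℕ → M.Dom} {i j : ℕ}
    (h : (gameOmega M φ0 s0).win (.inner ⟨.eq i j, e, s, true⟩ n) .eloise) :
    s i = s j := by
  exact h.2.mpr rfl

lemma win_claim_false {φ0 : SCLFormula V} {s0 : ℕ → M.Dom} {L : ℕ}
    (h : (gameOmega M φ0 s0).win (.inner ⟨.claim L, e, s, b⟩ n) .eloise) : False := by
  exact h.1

end Shapes

/-- Edge relation from a winning `rel`-atom for the binary vocabulary. -/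
lemma win_Eform {M : Struct.{u} binVocab} {φ0 : SCLFormula binVocab} {s0 s : ℕ → M.Dom}
    {e : ℕ → Option (SCLFormula binVocab)} {n : ℕ} {i j : ℕ}
    (h : (gameOmega M φ0 s0).win (.inner ⟨Eform i j, e, s, true⟩ n) .eloise) :
    Edge M (s i) (s j) := by
  have h2 := h.2.mpr rfl
  unfold atomSat Eform at h2
  unfold Edge
  have hfn : (fun k : Fin 2 => s (if k.val = 0 then i else j))
      = fun k : Fin 2 => if k.val = 0 then s i else s j := by
    funext k
    by_cases hk : k.val = 0 <;> simp [hk]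
  rw [← hfn]
  exact h2

/-- A closed walk yields a (simple) cycle. -/
lemma hasCycle_of_closedWalk (M : Struct.{u} binVocab) :
    ∀ k, ∀ g : ℕ → M.Dom, 1 ≤ k → g 0 = g k →
      (∀ i, i < k → Edge M (g i) (g (i + 1))) → HasCycle M := by
  intro k
  induction k using Nat.strong_induction_on with
  | _ k IH =>
    intro g hk hclosed hedges
    by_cases hdist : ∀ i j, i < k → j < k → i ≠ j → g i ≠ g j
    · exact ⟨k, g, hk, hedges, hclosed, hdist⟩
    · push_neg at hdist
      obtain ⟨i, j, hi, hj, hij, hgij⟩ := hdist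
      -- wlog i < j
      rcases Nat.lt_or_ge i j with hlt | hge
      · refine IH (j - i) (by omega) (fun t => g (i + t)) (by omega) ?_ ?_
        · simp only [Nat.add_zero]
          rw [show i + (j - i) = j from by omega]
          exact hgij
        · intro t ht
          show Edge M (g (i + t)) (g (i + (t + 1)))
          rw [show i + (t + 1) = (i + t) + 1 from by omega]
          exact hedges (i + t) (by omega)
      · have hlt : j < i := by omega
        refine IH (i - j) (by omega) (fun t => g (j + t)) (by omega) ?_ ?_
        · simp only [Nat.add_zero]
          rw [show j + (i - j) = i from by omega]
          exact hgij.symm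
        · intro t ht
          show Edge M (g (j + t)) (g (j + (t + 1)))
          rw [show j + (t + 1) = (j + t) + 1 from by omega]
          exact hedges (j + t) (by omega)

/-! ## phiCycle: hard direction -/

/-- The body of the label in `phiCycle`. -/
abbrev thC : SCLFormula binVocab :=
  .or (Eform 1 0) (.ex 2 (.and (Eform 1 2) (.ex 1 (.and (.eq 1 2) (.claim 0)))))

section CycleHard

variable {M : Struct.{u} binVocab} {s0 : ℕ → M.Dom}

lemma cycle_loop :
    ∀ m (e : ℕ → Option (SCLFormula binVocab)) (sa : ℕ → M.Dom),
      e 0 = some (.lab 0 thC) →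
      (gameOmega M phiCycle s0).HasWinningStrategy .eloise (.inner ⟨thC, e, sa, true⟩ m) →
      ∃ (k : ℕ) (g : ℕ → M.Dom), 1 ≤ k ∧ g 0 = sa 1 ∧ g k = sa 0 ∧ ∀ i, i < k → Edge M (g i) (g (i + 1)) := by
  intro m
  induction m using Nat.strong_induction_on with
  | _ m IH =>
  intro e sa he hW
  obtain ⟨x, hxe, hWx⟩ := HWS_eloise_step (gameOmega M phiCycle s0) hW rfl
    ⟨.inner ⟨Eform 1 0, e, sa, true⟩ m, GOStep.play _ _ _ _ (BStep.orLeft _ _ _ _ _ _)⟩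
  obtain ⟨q, k, rfl, hb⟩ := GOedge_inner hxe
  rcases BStep.inv_or hb with h1 | h1
  · -- Eloise closes: E(y,x) atom, walk of length 1
    injection h1 with hq hk
    subst hq; subst k
    have hwin := HWS_deadend (gameOmega M phiCycle s0) hWx deadEnd_rel
    have hedge : Edge M (sa 1) (sa 0) := win_Eform hwin
    refine ⟨1, fun t => match t with | 0 => sa 1 | _ + 1 => sa 0, le_rfl, rfl, rfl, ?_⟩
    intro i hi
    have : i = 0 := by omega
    subst this
    exact hedge
  · -- Eloise continues
    injection h1 with hq hk
    subst hq; subst k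
    obtain ⟨x2, hx2e, hW2⟩ := HWS_eloise_step (gameOmega M phiCycle s0) hWx rfl
      ⟨_, GOStep.play _ _ _ _ (BStep.exStep 2 _ e sa true m (Classical.arbitrary M.Dom))⟩
    obtain ⟨q2, k2, rfl, hb2⟩ := GOedge_inner hx2e
    obtain ⟨c, h2⟩ := BStep.inv_ex hb2
    injection h2 with hq2 hk2
    subst hq2; subst k2
    set sb := Function.update sa 2 c with hsb
    -- Abelard's conjunction: left branch gives the edge
    have hWL := HWS_abelard_step (gameOmega M phiCycle s0) hW2 rfl
      (GOStep.play _ _ _ _ (BStep.andLeft (Eform 1 2) _ e sb true m))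
    have hE1 : Edge M (sb 1) (sb 2) := win_Eform (HWS_deadend _ hWL deadEnd_rel)
    -- right branch continues
    have hW3 := HWS_abelard_step (gameOmega M phiCycle s0) hW2 rfl
      (GOStep.play _ _ _ _ (BStep.andRight (Eform 1 2) _ e sb true m))
    obtain ⟨x4, hx4e, hW4⟩ := HWS_eloise_step (gameOmega M phiCycle s0) hW3 rfl
      ⟨_, GOStep.play _ _ _ _ (BStep.exStep 1 _ e sb true m (Classical.arbitrary M.Dom))⟩
    obtain ⟨q4, k4, rfl, hb4⟩ := GOedge_inner hx4e
    obtain ⟨b', h4⟩ := BStep.inv_ex hb4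
    injection h4 with hq4 hk4
    subst hq4; subst k4
    set sc := Function.update sb 1 b' with hsc
    -- Abelard's second conjunction: left gives y = z
    have hWeq := HWS_abelard_step (gameOmega M phiCycle s0) hW4 rfl
      (GOStep.play _ _ _ _ (BStep.andLeft (.eq 1 2) _ e sc true m))
    have heq12 : sc 1 = sc 2 := win_eq_true (HWS_deadend _ hWeq deadEnd_eq)
    -- right: the claim symbol
    have hW5 := HWS_abelard_step (gameOmega M phiCycle s0) hW4 rfl
      (GOStep.play _ _ _ _ (BStep.andRight (.eq 1 2) _ e sc true m))
    obtain ⟨m', rfl⟩ : ∃ m'', m = m'' + 1 := by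
      cases m with
      | zero => exact absurd (HWS_deadend _ hW5 deadEnd_claim_zero) win_claim_false
      | succ m'' => exact ⟨m'', rfl⟩
    obtain ⟨x6, hx6e, hW6⟩ := HWS_eloise_step (gameOmega M phiCycle s0) hW5 rfl
      ⟨_, GOStep.play _ _ _ _ (BStep.claimStep 0 e sc true (.lab 0 thC) m' he)⟩
    obtain ⟨q6, k6, rfl, hb6⟩ := GOedge_inner hx6e
    obtain ⟨χ, n', hn', hχ, h6⟩ := BStep.inv_claim hb6
    rw [he] at hχ
    have hχ' : χ = .lab 0 thC := (Option.some.inj hχ).symm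
    subst hχ'
    have hn'' : n' = m' := by omega
    subst n'
    injection h6 with hq6 hk6
    subst hq6; subst k6
    -- forced label step
    obtain ⟨x7, hx7e, hW7⟩ := HWS_eloise_step (gameOmega M phiCycle s0) hW6 rfl
      ⟨_, GOStep.play _ _ _ _ (BStep.labStep 0 thC e sc true m')⟩
    obtain ⟨q7, k7, rfl, hb7⟩ := GOedge_inner hx7e
    have h7 := BStep.inv_lab hb7
    injection h7 with hq7 hk7
    subst hq7; subst k7
    obtain ⟨k', g', hk', hg0, hgk, hgedges⟩ :=
      IH m' (by omega) (Function.update e 0 (some (.lab 0 thC))) sc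
        (by simp) hW7
    -- assemble the walk
    have hsb1 : sb 1 = sa 1 := by rw [hsb]; simp [Function.update]
    have hsb0 : sb 0 = sa 0 := by rw [hsb]; simp [Function.update]
    have hsb2 : sb 2 = c := by rw [hsb]; simp [Function.update]
    have hsc0 : sc 0 = sa 0 := by rw [hsc, hsb]; simp [Function.update]
    have hsc2 : sc 2 = c := by rw [hsc]; simp [Function.update, hsb2]
    refine ⟨k' + 1, fun t => match t with | 0 => sa 1 | t + 1 => g' t, by omega, rfl, ?_, ?_⟩
    · show g' k' = sa 0
      rw [hgk, hsc0]
    · intro i hi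
      cases i with
      | zero =>
        show Edge M (sa 1) (g' 0)
        rw [hg0, heq12, hsc2, ← hsb2, ← hsb1]
        exact hE1
      | succ t =>
        show Edge M (g' t) (g' (t + 1))
        exact hgedges t (by omega)

/-- Hard direction for `phiCycle`. -/
lemma cycle_of_bnd (hB : BndTrue M s0 phiCycle) : HasCycle M := by
  obtain ⟨σ, hσ⟩ := hB
  have hW0 : (gameOmega M phiCycle s0).HasWinningStrategy .eloise .start := ⟨σ, hσ⟩
  -- Abelard picks 0
  have hW1 := HWS_abelard_step (gameOmega M phiCycle s0) hW0 rfl (GOStep.abelardPick 0)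
  -- Eloise picks the clock
  obtain ⟨x1, hx1e, hW2⟩ := HWS_eloise_step (gameOmega M phiCycle s0) hW1 rfl
    ⟨_, GOStep.eloisePick 0 0 le_rfl⟩
  rcases GOStep.cases' hx1e with ⟨n', h1, _⟩ | ⟨n', n, _, h1, h2⟩ | ⟨p, q, m, k, h1, _, _⟩
  · cases h1
  · subst h2
    -- initPos phiCycle s0 with clock n; two existential moves
    obtain ⟨x2, hx2e, hW3⟩ := HWS_eloise_step (gameOmega M phiCycle s0) hW2 rfl
      ⟨_, GOStep.play _ _ _ _ (BStep.exStep 0 _ _ _ true n (Classical.arbitrary M.Dom))⟩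
    obtain ⟨q2, k2, rfl, hb2⟩ := GOedge_inner hx2e
    obtain ⟨a, h2'⟩ := BStep.inv_ex hb2
    injection h2' with hq2 hk2
    subst hq2; subst k2
    obtain ⟨x3, hx3e, hW4⟩ := HWS_eloise_step (gameOmega M phiCycle s0) hW3 rfl
      ⟨_, GOStep.play _ _ _ _ (BStep.exStep 1 _ _ _ true n (Classical.arbitrary M.Dom))⟩
    obtain ⟨q3, k3, rfl, hb3⟩ := GOedge_inner hx3e
    obtain ⟨b, h3⟩ := BStep.inv_ex hb3
    injection h3 with hq3 hk3
    subst hq3; subst k3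
    set sb := Function.update (Function.update s0 0 a) 1 b with hsb
    -- Abelard's conjunction: left gives x = y
    have hWeq := HWS_abelard_step (gameOmega M phiCycle s0) hW4 rfl
      (GOStep.play _ _ _ _ (BStep.andLeft (.eq 0 1) _ _ sb true n))
    have hab : sb 0 = sb 1 := win_eq_true (HWS_deadend _ hWeq deadEnd_eq)
    -- right: the label
    have hW5 := HWS_abelard_step (gameOmega M phiCycle s0) hW4 rfl
      (GOStep.play _ _ _ _ (BStep.andRight (.eq 0 1) (.lab 0 thC) _ sb true n))
    obtain ⟨x6, hx6e, hW6⟩ := HWS_eloise_step (gameOmega M phiCycle s0) hW5 rfl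
      ⟨_, GOStep.play _ _ _ _ (BStep.labStep 0 thC _ sb true n)⟩
    obtain ⟨q6, k6, rfl, hb6⟩ := GOedge_inner hx6e
    have h6 := BStep.inv_lab hb6
    injection h6 with hq6 hk6
    subst hq6; subst k6
    obtain ⟨k', g', hk', hg0, hgk, hgedges⟩ :=
      cycle_loop n _ sb (by simp) hW6
    exact hasCycle_of_closedWalk M k' g' hk'
      (by rw [hg0, hgk, hab]) hgedges
  · cases h1

end CycleHard

/-! ## phiDiam: hard direction -/

/-- The body of the label in `phiDiam`. -/
abbrev thD : SCLFormula binVocab :=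
  .or (Eform 0 1) (.ex 2 (.and (Eform 0 2) (.ex 0 (.and (.eq 0 2) (.claim 0)))))

section DiamHard

variable {M : Struct.{u} binVocab} {s0 : ℕ → M.Dom}

lemma diam_loop :
    ∀ m (e : ℕ → Option (SCLFormula binVocab)) (sa : ℕ → M.Dom),
      e 0 = some (.lab 0 thD) →
      (gameOmega M phiDiam s0).HasWinningStrategy .eloise (.inner ⟨thD, e, sa, true⟩ m) →
      ∃ (k : ℕ) (g : ℕ → M.Dom), 1 ≤ k ∧ k ≤ m + 1 ∧ g 0 = sa 0 ∧ g k = sa 1 ∧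
        ∀ i, i < k → Edge M (g i) (g (i + 1)) := by
  intro m
  induction m using Nat.strong_induction_on with
  | _ m IH =>
  intro e sa he hW
  obtain ⟨x, hxe, hWx⟩ := HWS_eloise_step (gameOmega M phiDiam s0) hW rfl
    ⟨.inner ⟨Eform 0 1, e, sa, true⟩ m, GOStep.play _ _ _ _ (BStep.orLeft _ _ _ _ _ _)⟩
  obtain ⟨q, k, rfl, hb⟩ := GOedge_inner hxe
  rcases BStep.inv_or hb with h1 | h1
  · injection h1 with hq hk
    subst hq; subst k
    have hedge : Edge M (sa 0) (sa 1) := win_Eform (HWS_deadend _ hWx deadEnd_rel)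
    refine ⟨1, fun t => match t with | 0 => sa 0 | _ + 1 => sa 1, le_rfl, by omega, rfl, rfl, ?_⟩
    intro i hi
    have : i = 0 := by omega
    subst this
    exact hedge
  · injection h1 with hq hk
    subst hq; subst k
    obtain ⟨x2, hx2e, hW2⟩ := HWS_eloise_step (gameOmega M phiDiam s0) hWx rfl
      ⟨_, GOStep.play _ _ _ _ (BStep.exStep 2 _ e sa true m (Classical.arbitrary M.Dom))⟩
    obtain ⟨q2, k2, rfl, hb2⟩ := GOedge_inner hx2e
    obtain ⟨c, h2⟩ := BStep.inv_ex hb2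
    injection h2 with hq2 hk2
    subst hq2; subst k2
    set sb := Function.update sa 2 c with hsb
    have hWL := HWS_abelard_step (gameOmega M phiDiam s0) hW2 rfl
      (GOStep.play _ _ _ _ (BStep.andLeft (Eform 0 2) _ e sb true m))
    have hE1 : Edge M (sb 0) (sb 2) := win_Eform (HWS_deadend _ hWL deadEnd_rel)
    have hW3 := HWS_abelard_step (gameOmega M phiDiam s0) hW2 rfl
      (GOStep.play _ _ _ _ (BStep.andRight (Eform 0 2) _ e sb true m))
    obtain ⟨x4, hx4e, hW4⟩ := HWS_eloise_step (gameOmega M phiDiam s0) hW3 rfl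
      ⟨_, GOStep.play _ _ _ _ (BStep.exStep 0 _ e sb true m (Classical.arbitrary M.Dom))⟩
    obtain ⟨q4, k4, rfl, hb4⟩ := GOedge_inner hx4e
    obtain ⟨b', h4⟩ := BStep.inv_ex hb4
    injection h4 with hq4 hk4
    subst hq4; subst k4
    set sc := Function.update sb 0 b' with hsc
    have hWeq := HWS_abelard_step (gameOmega M phiDiam s0) hW4 rfl
      (GOStep.play _ _ _ _ (BStep.andLeft (.eq 0 2) _ e sc true m))
    have heq02 : sc 0 = sc 2 := win_eq_true (HWS_deadend _ hWeq deadEnd_eq)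
    have hW5 := HWS_abelard_step (gameOmega M phiDiam s0) hW4 rfl
      (GOStep.play _ _ _ _ (BStep.andRight (.eq 0 2) _ e sc true m))
    obtain ⟨m', rfl⟩ : ∃ m'', m = m'' + 1 := by
      cases m with
      | zero => exact absurd (HWS_deadend _ hW5 deadEnd_claim_zero) win_claim_false
      | succ m'' => exact ⟨m'', rfl⟩
    obtain ⟨x6, hx6e, hW6⟩ := HWS_eloise_step (gameOmega M phiDiam s0) hW5 rfl
      ⟨_, GOStep.play _ _ _ _ (BStep.claimStep 0 e sc true (.lab 0 thD) m' he)⟩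
    obtain ⟨q6, k6, rfl, hb6⟩ := GOedge_inner hx6e
    obtain ⟨χ, n', hn', hχ, h6⟩ := BStep.inv_claim hb6
    rw [he] at hχ
    have hχ' : χ = .lab 0 thD := (Option.some.inj hχ).symm
    subst hχ'
    have hn'' : n' = m' := by omega
    subst n'
    injection h6 with hq6 hk6
    subst hq6; subst k6
    obtain ⟨x7, hx7e, hW7⟩ := HWS_eloise_step (gameOmega M phiDiam s0) hW6 rfl
      ⟨_, GOStep.play _ _ _ _ (BStep.labStep 0 thD e sc true m')⟩
    obtain ⟨q7, k7, rfl, hb7⟩ := GOedge_inner hx7e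
    have h7 := BStep.inv_lab hb7
    injection h7 with hq7 hk7
    subst hq7; subst k7
    obtain ⟨k', g', hk', hk'le, hg0, hgk, hgedges⟩ :=
      IH m' (by omega) (Function.update e 0 (some (.lab 0 thD))) sc
        (by simp) hW7
    have hsb0 : sb 0 = sa 0 := by rw [hsb]; simp [Function.update]
    have hsb1 : sb 1 = sa 1 := by rw [hsb]; simp [Function.update]
    have hsb2 : sb 2 = c := by rw [hsb]; simp [Function.update]
    have hsc1 : sc 1 = sa 1 := by rw [hsc]; simp [Function.update, hsb1]
    have hsc2 : sc 2 = c := by rw [hsc]; simp [Function.update, hsb2]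
    refine ⟨k' + 1, fun t => match t with | 0 => sa 0 | t + 1 => g' t, by omega, by omega,
      rfl, ?_, ?_⟩
    · show g' k' = sa 1
      rw [hgk, hsc1]
    · intro i hi
      cases i with
      | zero =>
        show Edge M (sa 0) (g' 0)
        rw [hg0, heq02, hsc2, ← hsb2, ← hsb0]
        exact hE1
      | succ t =>
        show Edge M (g' t) (g' (t + 1))
        exact hgedges t (by omega)

/-- Hard direction for `phiDiam`. -/
lemma diam_of_bnd (hB : BndTrue M s0 phiDiam) : FiniteDiameter M := by
  have hW0 : (gameOmega M phiDiam s0).HasWinningStrategy .eloise .start := hB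
  have hW1 := HWS_abelard_step (gameOmega M phiDiam s0) hW0 rfl (GOStep.abelardPick 0)
  obtain ⟨x1, hx1e, hW2⟩ := HWS_eloise_step (gameOmega M phiDiam s0) hW1 rfl
    ⟨_, GOStep.eloisePick 0 0 le_rfl⟩
  rcases GOStep.cases' hx1e with ⟨n', h1, _⟩ | ⟨n', n, _, h1, h2⟩ | ⟨p, q, m, k, h1, _, _⟩
  · cases h1
  · subst h2
    refine ⟨n + 1, fun u v => ?_⟩
    -- Abelard picks u and v
    have hW3 := HWS_abelard_step (gameOmega M phiDiam s0) hW2 rfl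
      (GOStep.play _ _ _ _ (BStep.allStep 0 _ _ _ true n u))
    have hW4 := HWS_abelard_step (gameOmega M phiDiam s0) hW3 rfl
      (GOStep.play _ _ _ _ (BStep.allStep 1 _ _ _ true n v))
    set sb := Function.update (Function.update s0 0 u) 1 v with hsb
    have hsb0 : sb 0 = u := by rw [hsb]; simp [Function.update]
    have hsb1 : sb 1 = v := by rw [hsb]; simp [Function.update]
    -- Eloise at the disjunction
    obtain ⟨x5, hx5e, hW5⟩ := HWS_eloise_step (gameOmega M phiDiam s0) hW4 rfl
      ⟨_, GOStep.play _ _ _ _ (BStep.orLeft (.eq 0 1) _ _ sb true n)⟩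
    obtain ⟨q5, k5, rfl, hb5⟩ := GOedge_inner hx5e
    rcases BStep.inv_or hb5 with h5 | h5
    · -- u = v
      injection h5 with hq5 hk5
      subst hq5; subst k5
      have huv : sb 0 = sb 1 := win_eq_true (HWS_deadend _ hW5 deadEnd_eq)
      exact ⟨0, fun _ => u, by omega, rfl, by rw [← hsb0, huv, hsb1], fun i hi => by omega⟩
    · injection h5 with hq5 hk5
      subst hq5; subst k5
      obtain ⟨x6, hx6e, hW6⟩ := HWS_eloise_step (gameOmega M phiDiam s0) hW5 rfl
        ⟨_, GOStep.play _ _ _ _ (BStep.labStep 0 thD _ sb true n)⟩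
      obtain ⟨q6, k6, rfl, hb6⟩ := GOedge_inner hx6e
      have h6 := BStep.inv_lab hb6
      injection h6 with hq6 hk6
      subst hq6; subst k6
      obtain ⟨k', g', hk', hk'le, hg0, hgk, hgedges⟩ :=
        diam_loop n _ sb (by simp) hW6
      exact ⟨k', g', by omega, by rw [hg0, hsb0], by rw [hgk, hsb1], hgedges⟩
  · cases h1

end DiamHard

/-! ## phiCycle: easy direction -/

/-- Eloise can loop: the current vertex `sa 1` is on the cycle with enough clock. -/
def CondC (M : Struct.{u} binVocab) (n : ℕ) (f : ℕ → M.Dom) (sa : ℕ → M.Dom) (c : ℕ) : Prop :=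
  ∃ i, i < n ∧ sa 1 = f i ∧ n ≤ c + i + 1

abbrev psyC : SCLFormula binVocab := .ex 1 (.and (.eq 1 2) (.claim 0))
abbrev pszC : SCLFormula binVocab := .ex 2 (.and (Eform 1 2) psyC)

open Classical in
noncomputable def cycWitness (M : Struct.{u} binVocab) (n : ℕ) (f : ℕ → M.Dom)
    (sa : ℕ → M.Dom) (c : ℕ) :
    ℕ → SCLFormula binVocab → M.Dom
  | 0, _ => f 0
  | 1, .and (.eq 0 1) _ => f 0
  | 1, _ => sa 2
  | 2, _ =>
      if h : CondC M n f sa c then f (Classical.choose h + 1) else Classical.arbitrary M.Dom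
  | _, _ => Classical.arbitrary M.Dom

open Classical in
noncomputable def FCyc (M : Struct.{u} binVocab) (s0 : ℕ → M.Dom) (n : ℕ) (f : ℕ → M.Dom) :
    GOPos binVocab M.Dom → GOPos binVocab M.Dom
  | .start => .mid 0
  | .mid n' => .inner (initPos phiCycle s0) (n' + n)
  | .inner ⟨.not φ, e, sa, b⟩ c => .inner ⟨φ, e, sa, !b⟩ c
  | .inner ⟨.and φ _, e, sa, b⟩ c => .inner ⟨φ, e, sa, b⟩ c
  | .inner ⟨.or φ ψ, e, sa, b⟩ c =>
      if h : CondC M n f sa c then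
        if Classical.choose h + 1 = n then .inner ⟨φ, e, sa, b⟩ c
        else .inner ⟨ψ, e, sa, b⟩ c
      else .inner ⟨φ, e, sa, b⟩ c
  | .inner ⟨.ex x φ, e, sa, b⟩ c =>
      .inner ⟨φ, e, Function.update sa x (cycWitness M n f sa c x φ), b⟩ c
  | .inner ⟨.all x φ, e, sa, b⟩ c =>
      .inner ⟨φ, e, Function.update sa x (Classical.arbitrary M.Dom), b⟩ c
  | .inner ⟨.lab L φ, e, sa, b⟩ c =>
      .inner ⟨φ, Function.update e L (some (.lab L φ)), sa, b⟩ c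
  | .inner ⟨.claim L, e, sa, b⟩ c =>
      match c with
      | 0 => .start
      | c' + 1 => (e L).elim .start (fun χ => .inner ⟨χ, e, sa, b⟩ c')
  | .inner ⟨_, _, _, _⟩ _ => .start

/-- The invariant for Eloise's strategy in the cycle game. -/
def InvCyc (M : Struct.{u} binVocab) (n : ℕ) (f : ℕ → M.Dom) :
    GOPos binVocab M.Dom → Prop
  | .start => True
  | .mid _ => True
  | .inner ⟨form, e, sa, b⟩ c =>
      b = true ∧
      match form with
      | .eq i j => sa i = sa j
      | .rel R a => M.interp R (fun i => sa (a i))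
      | .ex x φ =>
          (x = 0 ∧ φ = .ex 1 (.and (.eq 0 1) (.lab 0 thC)) ∧ n ≤ c + 1) ∨
          (x = 1 ∧ φ = .and (.eq 0 1) (.lab 0 thC) ∧ sa 0 = f 0 ∧ n ≤ c + 1) ∨
          (x = 2 ∧ φ = .and (Eform 1 2) psyC ∧ e 0 = some (.lab 0 thC) ∧ sa 0 = f 0 ∧
            ∃ h : CondC M n f sa c, Classical.choose h + 1 ≠ n) ∨
          (x = 1 ∧ φ = .and (.eq 1 2) (.claim 0) ∧ e 0 = some (.lab 0 thC) ∧ sa 0 = f 0 ∧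
            ∃ j, j < n ∧ sa 2 = f j ∧ n ≤ c + j)
      | .and φ ψ =>
          (φ = .eq 0 1 ∧ ψ = .lab 0 thC ∧ sa 0 = f 0 ∧ sa 1 = f 0 ∧ n ≤ c + 1) ∨
          (φ = Eform 1 2 ∧ ψ = psyC ∧ Edge M (sa 1) (sa 2) ∧ e 0 = some (.lab 0 thC) ∧
            sa 0 = f 0 ∧ ∃ j, j < n ∧ sa 2 = f j ∧ n ≤ c + j) ∨
          (φ = .eq 1 2 ∧ ψ = .claim 0 ∧ sa 1 = sa 2 ∧ e 0 = some (.lab 0 thC) ∧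
            sa 0 = f 0 ∧ ∃ j, j < n ∧ sa 2 = f j ∧ n ≤ c + j)
      | .or φ ψ =>
          φ = Eform 1 0 ∧ ψ = pszC ∧ e 0 = some (.lab 0 thC) ∧ sa 0 = f 0 ∧
            ∃ i, i < n ∧ sa 1 = f i ∧ n ≤ c + i + 1
      | .lab L φ =>
          L = 0 ∧ φ = thC ∧ sa 0 = f 0 ∧ ∃ i, i < n ∧ sa 1 = f i ∧ n ≤ c + i + 1
      | .claim L =>
          L = 0 ∧ e 0 = some (.lab 0 thC) ∧ sa 0 = f 0 ∧ 1 ≤ c ∧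
            ∃ j, j < n ∧ sa 1 = f j ∧ n ≤ c + j
      | _ => False

section CycleEasy

variable {M : Struct.{u} binVocab} {s0 : ℕ → M.Dom} {n : ℕ} {f : ℕ → M.Dom}

lemma interp_of_Edge {sa : ℕ → M.Dom} {i j : ℕ} (h : Edge M (sa i) (sa j)) :
    M.interp Unit.unit (fun k : Fin 2 => sa ((fun k : Fin 2 => if k.val = 0 then i else j) k)) := by
  unfold Edge at h
  have hfn : (fun k : Fin 2 => sa (if k.val = 0 then i else j))
      = fun k : Fin 2 => if k.val = 0 then sa i else sa j := by
    funext k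
    by_cases hk : k.val = 0 <;> simp [hk]
  rw [hfn]
  exact h

lemma bnd_of_cycle (hn : 1 ≤ n) (hedges : ∀ i, i < n → Edge M (f i) (f (i + 1)))
    (hclosed : f 0 = f n) : BndTrue M s0 phiCycle := by
  classical
  apply winning_of_invariant (gameOmega M phiCycle s0) .start (FCyc M s0 n f)
    (InvCyc M n f) (noInfOmega M phiCycle s0 .start) trivial
  · -- dead ends are winning
    rintro (_ | n' | ⟨⟨form, e, sa, b⟩, c⟩) hInv hd
    · exact absurd (GOStep.abelardPick 0) (hd _)
    · exact absurd (GOStep.eloisePick n' n' le_rfl) (hd _)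
    · obtain ⟨hb, hI⟩ := hInv
      subst hb
      cases form with
      | bot => exact hI.elim
      | eq i j => exact ⟨trivial, by simpa [atomSat] using hI⟩
      | rel R a => exact ⟨trivial, by simpa [atomSat] using hI⟩
      | claim L =>
        obtain ⟨hL0, he0, _, hc, _⟩ := hI
        obtain ⟨c', rfl⟩ : ∃ c', c = c' + 1 := ⟨c - 1, by omega⟩
        exact absurd (GOStep.play _ _ _ _ (BStep.claimStep L e sa true (.lab 0 thC) c'
          (by rw [(show L = 0 from hL0), he0]))) (hd _)
      | not φ => exact hI.elim
      | and φ ψ => exact absurd (GOStep.play _ _ _ _ (BStep.andLeft φ ψ e sa true c)) (hd _)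
      | or φ ψ => exact absurd (GOStep.play _ _ _ _ (BStep.orLeft φ ψ e sa true c)) (hd _)
      | ex x φ => exact absurd (GOStep.play _ _ _ _
          (BStep.exStep x φ e sa true c (Classical.arbitrary M.Dom))) (hd _)
      | all x φ => exact absurd (GOStep.play _ _ _ _
          (BStep.allStep x φ e sa true c (Classical.arbitrary M.Dom))) (hd _)
      | lab L φ => exact absurd (GOStep.play _ _ _ _ (BStep.labStep L φ e sa true c)) (hd _)
  · -- Abelard's moves preserve the invariant
    rintro (_ | n' | ⟨⟨form, e, sa, b⟩, c⟩) x hInv ht hx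
    · rcases GOStep.cases' hx with ⟨n', _, rfl⟩ | ⟨_, _, _, h1, _⟩ | ⟨_, _, _, _, h1, _, _⟩
      · exact trivial
      · cases h1
      · cases h1
    · exact absurd ht (by simp [gameOmega, goTurn])
    · obtain ⟨hb, hI⟩ := hInv
      subst hb
      obtain ⟨q, k, rfl, hbstep⟩ := GOedge_inner hx
      cases form with
      | and φ ψ =>
        rcases hI with ⟨rfl, rfl, h1, h2, h3⟩ | ⟨rfl, rfl, hE, he0, h0, j, hj, h2, h3⟩ |
          ⟨rfl, rfl, h12, he0, h0, j, hj, h2, h3⟩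
        · rcases BStep.inv_and hbstep with h | h <;>
            (injection h with hq hk; subst hq; subst k)
          · exact ⟨rfl, show sa 0 = sa 1 by rw [h1, h2]⟩
          · exact ⟨rfl, rfl, rfl, h1, 0, by omega, h2, by omega⟩
        · rcases BStep.inv_and hbstep with h | h <;>
            (injection h with hq hk; subst hq; subst k)
          · exact ⟨rfl, interp_of_Edge hE⟩
          · exact ⟨rfl, Or.inr (Or.inr (Or.inr ⟨rfl, rfl, he0, h0, j, hj, h2, h3⟩))⟩
        · rcases BStep.inv_and hbstep with h | h <;>
            (injection h with hq hk; subst hq; subst k)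
          · exact ⟨rfl, h12⟩
          · exact ⟨rfl, rfl, he0, h0, by omega, j, hj, by rw [h12]; exact h2, h3⟩
      | all x φ => exact hI.elim
      | bot => exact hI.elim
      | not φ => exact hI.elim
      | eq i j => exact absurd ht (by simp [gameOmega, goTurn, posTurn])
      | rel R a => exact absurd ht (by simp [gameOmega, goTurn, posTurn])
      | claim L => exact absurd ht (by simp [gameOmega, goTurn, posTurn])
      | or φ ψ => exact absurd ht (by simp [gameOmega, goTurn, posTurn])
      | ex x φ => exact absurd ht (by simp [gameOmega, goTurn, posTurn])
      | lab L φ => exact absurd ht (by simp [gameOmega, goTurn, posTurn])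
  · -- Eloise's strategy moves preserve the invariant
    rintro (_ | n' | ⟨⟨form, e, sa, b⟩, c⟩) hInv ht hnd
    · exact absurd ht (by simp [gameOmega, goTurn])
    · exact ⟨rfl, Or.inl ⟨rfl, rfl, by omega⟩⟩
    · obtain ⟨hb, hI⟩ := hInv
      subst hb
      cases form with
      | bot => exact hI.elim
      | not φ => exact hI.elim
      | all x φ => exact hI.elim
      | and φ ψ => exact absurd ht (by simp [gameOmega, goTurn, posTurn])
      | eq i j => exact absurd (fun y hy => by
          obtain ⟨q, k, _, hb2⟩ := GOedge_inner hy
          cases hb2) hnd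
      | rel R a => exact absurd (fun y hy => by
          obtain ⟨q, k, _, hb2⟩ := GOedge_inner hy
          cases hb2) hnd
      | or φ ψ =>
        obtain ⟨rfl, rfl, he0, h0, i, hi, h1, h2⟩ := hI
        have hcond : CondC M n f sa c := ⟨i, hi, h1, h2⟩
        show InvCyc M n f (FCyc M s0 n f _)
        rw [FCyc]
        rw [dif_pos hcond]
        set i0 := Classical.choose hcond with hi0
        obtain ⟨hi0n, hsa1, hclk⟩ := Classical.choose_spec hcond
        by_cases hlast : i0 + 1 = n
        · rw [if_pos hlast]
          refine ⟨rfl, ?_⟩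
          show M.interp _ _
          refine interp_of_Edge ?_
          have : sa 0 = f (i0 + 1) := by rw [h0, hclosed, hlast]
          rw [hsa1, this]
          exact hedges i0 hi0n
        · rw [if_neg hlast]
          exact ⟨rfl, Or.inr (Or.inr (Or.inl ⟨rfl, rfl, he0, h0, hcond, hlast⟩))⟩
      | lab L φ =>
        obtain ⟨rfl, rfl, h0, i, hi, h1, h2⟩ := hI
        exact ⟨rfl, rfl, rfl, by simp, h0, i, hi, h1, h2⟩
      | claim L =>
        obtain ⟨rfl, he0, h0, hc, j, hj, h1, h2⟩ := hI
        obtain ⟨c', rfl⟩ : ∃ c', c = c' + 1 := ⟨c - 1, by omega⟩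
        show InvCyc M n f ((e 0).elim .start (fun χ => .inner ⟨χ, e, sa, true⟩ c'))
        rw [he0]
        exact ⟨rfl, rfl, rfl, h0, j, hj, h1, by omega⟩
      | ex x φ =>
        rcases hI with ⟨rfl, rfl, h1⟩ | ⟨rfl, rfl, h0, h1⟩ | ⟨rfl, rfl, he0, h0, hcond, hne⟩ |
          ⟨rfl, rfl, he0, h0, j, hj, h1, h2⟩
        · -- x = 0: pick f 0
          refine ⟨rfl, Or.inr (Or.inl ⟨rfl, rfl, ?_, h1⟩)⟩
          show Function.update sa 0 (cycWitness M n f sa c 0 _) 0 = f 0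
          rw [Function.update_self]
          rfl
        · -- x = 1: pick f 0
          refine ⟨rfl, Or.inl ⟨rfl, rfl, ?_, ?_, h1⟩⟩
          · show Function.update sa 1 (cycWitness M n f sa c 1 _) 0 = f 0
            rw [Function.update_of_ne (by norm_num)]
            exact h0
          · show Function.update sa 1 (cycWitness M n f sa c 1 _) 1 = f 0
            rw [Function.update_self]
            rfl
        · -- x = 2: pick f (i0 + 1)
          obtain ⟨hi0n, hsa1, hclk⟩ := Classical.choose_spec hcond
          have hwit : cycWitness M n f sa c 2 (.and (Eform 1 2) psyC)
              = f (Classical.choose hcond + 1) := by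
            rw [cycWitness]
            rw [dif_pos hcond]
          refine ⟨rfl, Or.inr (Or.inl ⟨rfl, rfl, ?_, ?_, ?_, ?_⟩)⟩
          · show Edge M (Function.update sa 2 _ 1) (Function.update sa 2 _ 2)
            rw [Function.update_of_ne (by norm_num : (1 : ℕ) ≠ 2), Function.update_self, hwit]
            have h' := hedges (Classical.choose hcond) hi0n
            rwa [← hsa1] at h'
          · exact he0
          · show Function.update sa 2 _ 0 = f 0
            rw [Function.update_of_ne (by norm_num : (0 : ℕ) ≠ 2)]
            exact h0
          · refine ⟨Classical.choose hcond + 1, by omega, ?_, by omega⟩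
            show Function.update sa 2 _ 2 = f (Classical.choose hcond + 1)
            rw [Function.update_self, hwit]
        · -- x = 1 again: pick sa 2
          have hwit : cycWitness M n f sa c 1 (.and (.eq 1 2) (.claim 0)) = sa 2 := rfl
          refine ⟨rfl, Or.inr (Or.inr ⟨rfl, rfl, ?_, ?_, ?_, ?_⟩)⟩
          · show Function.update sa 1 _ 1 = Function.update sa 1 _ 2
            rw [Function.update_self, Function.update_of_ne (by norm_num : (2 : ℕ) ≠ 1), hwit]
          · exact he0
          · show Function.update sa 1 _ 0 = f 0
            rw [Function.update_of_ne (by norm_num : (0 : ℕ) ≠ 1)]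
            exact h0
          · refine ⟨j, hj, ?_, h2⟩
            show Function.update sa 1 _ 2 = f j
            rw [Function.update_of_ne (by norm_num : (2 : ℕ) ≠ 1)]
            exact h1
  · -- legality
    rintro (_ | n' | ⟨⟨form, e, sa, b⟩, c⟩) ht hex
    · exact absurd ht (by simp [gameOmega, goTurn])
    · exact GOStep.eloisePick n' (n' + n) (by omega)
    · cases form with
      | bot =>
        obtain ⟨y, hy⟩ := hex
        obtain ⟨q, k, _, hb2⟩ := GOedge_inner hy
        cases hb2
      | eq i j =>
        obtain ⟨y, hy⟩ := hex
        obtain ⟨q, k, _, hb2⟩ := GOedge_inner hy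
        cases hb2
      | rel R a =>
        obtain ⟨y, hy⟩ := hex
        obtain ⟨q, k, _, hb2⟩ := GOedge_inner hy
        cases hb2
      | not φ => exact GOStep.play _ _ _ _ (BStep.neg φ e sa b c)
      | and φ ψ => exact GOStep.play _ _ _ _ (BStep.andLeft φ ψ e sa b c)
      | or φ ψ =>
        show (gameOmega M phiCycle s0).edge _ (FCyc M s0 n f _)
        rw [FCyc]
        split
        · split
          · exact GOStep.play _ _ _ _ (BStep.orLeft φ ψ e sa b c)
          · exact GOStep.play _ _ _ _ (BStep.orRight φ ψ e sa b c)
        · exact GOStep.play _ _ _ _ (BStep.orLeft φ ψ e sa b c)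
      | ex x φ => exact GOStep.play _ _ _ _ (BStep.exStep x φ e sa b c _)
      | all x φ => exact GOStep.play _ _ _ _ (BStep.allStep x φ e sa b c _)
      | lab L φ => exact GOStep.play _ _ _ _ (BStep.labStep L φ e sa b c)
      | claim L =>
        obtain ⟨y, hy⟩ := hex
        obtain ⟨q, k, rfl, hb2⟩ := GOedge_inner hy
        obtain ⟨χ, c', rfl, hχ, _⟩ := BStep.inv_claim hb2
        show (gameOmega M phiCycle s0).edge _
          ((e L).elim .start (fun χ => .inner ⟨χ, e, sa, b⟩ c'))
        rw [hχ]
        exact GOStep.play _ _ _ _ (BStep.claimStep L e sa b χ c' hχ)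

end CycleEasy

/-! ## phiDiam: easy direction -/

abbrev psy0D : SCLFormula binVocab := .ex 0 (.and (.eq 0 2) (.claim 0))
abbrev pszD : SCLFormula binVocab := .ex 2 (.and (Eform 0 2) psy0D)
abbrev orD1 : SCLFormula binVocab := .or (.eq 0 1) (.lab 0 thD)

/-- There is a walk of length `1 ≤ m ≤ c + 1` from `sa 0` to `sa 1`. -/
def CondD (M : Struct.{u} binVocab) (sa : ℕ → M.Dom) (c : ℕ) : Prop :=
  ∃ (m : ℕ) (g : ℕ → M.Dom), 1 ≤ m ∧ m ≤ c + 1 ∧ g 0 = sa 0 ∧ g m = sa 1 ∧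
    ∀ i, i < m → Edge M (g i) (g (i + 1))

/-- There is a walk of length `1 ≤ m ≤ c` from `sa 2` to `sa 1`. -/
def RestD (M : Struct.{u} binVocab) (sa : ℕ → M.Dom) (c : ℕ) : Prop :=
  ∃ (m : ℕ) (g : ℕ → M.Dom), 1 ≤ m ∧ m ≤ c ∧ g 0 = sa 2 ∧ g m = sa 1 ∧
    ∀ i, i < m → Edge M (g i) (g (i + 1))

/-- There is a walk of length `1 ≤ m ≤ c` from `sa 0` to `sa 1`. -/
def ClaimD (M : Struct.{u} binVocab) (sa : ℕ → M.Dom) (c : ℕ) : Prop :=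
  ∃ (m : ℕ) (g : ℕ → M.Dom), 1 ≤ m ∧ m ≤ c ∧ g 0 = sa 0 ∧ g m = sa 1 ∧
    ∀ i, i < m → Edge M (g i) (g (i + 1))

noncomputable def pickMD {M : Struct.{u} binVocab} {sa : ℕ → M.Dom} {c : ℕ}
    (h : CondD M sa c) : ℕ := Classical.choose h

noncomputable def pickGD {M : Struct.{u} binVocab} {sa : ℕ → M.Dom} {c : ℕ}
    (h : CondD M sa c) : ℕ → M.Dom := Classical.choose (Classical.choose_spec h)

lemma pickD_spec {M : Struct.{u} binVocab} {sa : ℕ → M.Dom} {c : ℕ} (h : CondD M sa c) :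
    1 ≤ pickMD h ∧ pickMD h ≤ c + 1 ∧ pickGD h 0 = sa 0 ∧ pickGD h (pickMD h) = sa 1 ∧
      ∀ i, i < pickMD h → Edge M (pickGD h i) (pickGD h (i + 1)) :=
  Classical.choose_spec (Classical.choose_spec h)

open Classical in
noncomputable def diamWitness (M : Struct.{u} binVocab) (sa : ℕ → M.Dom) (c : ℕ) :
    ℕ → M.Dom
  | 0 => sa 2
  | 2 => if h : CondD M sa c then pickGD h 1 else Classical.arbitrary M.Dom
  | _ => Classical.arbitrary M.Dom

open Classical in
noncomputable def FDiam (M : Struct.{u} binVocab) (s0 : ℕ → M.Dom) (N : ℕ) :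
    GOPos binVocab M.Dom → GOPos binVocab M.Dom
  | .start => .mid 0
  | .mid n' => .inner (initPos phiDiam s0) (n' + N)
  | .inner ⟨.not φ, e, sa, b⟩ c => .inner ⟨φ, e, sa, !b⟩ c
  | .inner ⟨.and φ _, e, sa, b⟩ c => .inner ⟨φ, e, sa, b⟩ c
  | .inner ⟨.or φ ψ, e, sa, b⟩ c =>
      if φ = SCLFormula.eq 0 1 then
        (if sa 0 = sa 1 then .inner ⟨φ, e, sa, b⟩ c else .inner ⟨ψ, e, sa, b⟩ c)
      else if h : CondD M sa c then
        (if pickMD h = 1 then .inner ⟨φ, e, sa, b⟩ c else .inner ⟨ψ, e, sa, b⟩ c)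
      else .inner ⟨φ, e, sa, b⟩ c
  | .inner ⟨.ex x φ, e, sa, b⟩ c =>
      .inner ⟨φ, e, Function.update sa x (diamWitness M sa c x), b⟩ c
  | .inner ⟨.all x φ, e, sa, b⟩ c =>
      .inner ⟨φ, e, Function.update sa x (Classical.arbitrary M.Dom), b⟩ c
  | .inner ⟨.lab L φ, e, sa, b⟩ c =>
      .inner ⟨φ, Function.update e L (some (.lab L φ)), sa, b⟩ c
  | .inner ⟨.claim L, e, sa, b⟩ c =>
      match c with
      | 0 => .start
      | c' + 1 => (e L).elim .start (fun χ => .inner ⟨χ, e, sa, b⟩ c')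
  | .inner ⟨_, _, _, _⟩ _ => .start

/-- The invariant for Eloise's strategy in the diameter game. -/
def InvD (M : Struct.{u} binVocab) (N : ℕ) : GOPos binVocab M.Dom → Prop
  | .start => True
  | .mid _ => True
  | .inner ⟨form, e, sa, b⟩ c =>
      b = true ∧
      match form with
      | .eq i j => sa i = sa j
      | .rel R a => M.interp R (fun i => sa (a i))
      | .all x φ =>
          (x = 0 ∧ φ = .all 1 orD1 ∧ N ≤ c) ∨ (x = 1 ∧ φ = orD1 ∧ N ≤ c)
      | .or φ ψ =>
          (φ = .eq 0 1 ∧ ψ = .lab 0 thD ∧ N ≤ c ∧ (sa 0 = sa 1 ∨ CondD M sa c)) ∨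
          (φ = Eform 0 1 ∧ ψ = pszD ∧ e 0 = some (.lab 0 thD) ∧ CondD M sa c)
      | .lab L φ => L = 0 ∧ φ = thD ∧ CondD M sa c
      | .ex x φ =>
          (x = 2 ∧ φ = .and (Eform 0 2) psy0D ∧ e 0 = some (.lab 0 thD) ∧
            ∃ h : CondD M sa c, pickMD h ≠ 1) ∨
          (x = 0 ∧ φ = .and (.eq 0 2) (.claim 0) ∧ e 0 = some (.lab 0 thD) ∧ RestD M sa c)
      | .and φ ψ =>
          (φ = Eform 0 2 ∧ ψ = psy0D ∧ Edge M (sa 0) (sa 2) ∧ e 0 = some (.lab 0 thD) ∧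
            RestD M sa c) ∨
          (φ = .eq 0 2 ∧ ψ = .claim 0 ∧ sa 0 = sa 2 ∧ e 0 = some (.lab 0 thD) ∧
            RestD M sa c)
      | .claim L => L = 0 ∧ e 0 = some (.lab 0 thD) ∧ ClaimD M sa c
      | _ => False

section DiamEasy

variable {M : Struct.{u} binVocab} {s0 : ℕ → M.Dom} {N : ℕ}

lemma bnd_of_diam (hreach : ∀ u v : M.Dom, ReachIn M u v N) : BndTrue M s0 phiDiam := by
  classical
  apply winning_of_invariant (gameOmega M phiDiam s0) .start (FDiam M s0 N)
    (InvD M N) (noInfOmega M phiDiam s0 .start) trivial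
  · -- dead ends are winning
    rintro (_ | n' | ⟨⟨form, e, sa, b⟩, c⟩) hInv hd
    · exact absurd (GOStep.abelardPick 0) (hd _)
    · exact absurd (GOStep.eloisePick n' n' le_rfl) (hd _)
    · obtain ⟨hb, hI⟩ := hInv
      subst hb
      cases form with
      | bot => exact hI.elim
      | eq i j => exact ⟨trivial, by simpa [atomSat] using hI⟩
      | rel R a => exact ⟨trivial, by simpa [atomSat] using hI⟩
      | claim L =>
        obtain ⟨hL0, he0, m, g, hm1, hmc, _⟩ := hI
        obtain ⟨c', rfl⟩ : ∃ c', c = c' + 1 := ⟨c - 1, by omega⟩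
        exact absurd (GOStep.play _ _ _ _ (BStep.claimStep L e sa true (.lab 0 thD) c'
          (by rw [hL0, he0]))) (hd _)
      | not φ => exact hI.elim
      | and φ ψ => exact absurd (GOStep.play _ _ _ _ (BStep.andLeft φ ψ e sa true c)) (hd _)
      | or φ ψ => exact absurd (GOStep.play _ _ _ _ (BStep.orLeft φ ψ e sa true c)) (hd _)
      | ex x φ => exact absurd (GOStep.play _ _ _ _
          (BStep.exStep x φ e sa true c (Classical.arbitrary M.Dom))) (hd _)
      | all x φ => exact absurd (GOStep.play _ _ _ _
          (BStep.allStep x φ e sa true c (Classical.arbitrary M.Dom))) (hd _)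
      | lab L φ => exact absurd (GOStep.play _ _ _ _ (BStep.labStep L φ e sa true c)) (hd _)
  · -- Abelard's moves preserve the invariant
    rintro (_ | n' | ⟨⟨form, e, sa, b⟩, c⟩) x hInv ht hx
    · rcases GOStep.cases' hx with ⟨n', _, rfl⟩ | ⟨_, _, _, h1, _⟩ | ⟨_, _, _, _, h1, _, _⟩
      · exact trivial
      · cases h1
      · cases h1
    · exact absurd ht (by simp [gameOmega, goTurn])
    · obtain ⟨hb, hI⟩ := hInv
      subst hb
      obtain ⟨q, k, rfl, hbstep⟩ := GOedge_inner hx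
      cases form with
      | and φ ψ =>
        rcases hI with ⟨rfl, rfl, hE, he0, hrest⟩ | ⟨rfl, rfl, h02, he0, hrest⟩
        · rcases BStep.inv_and hbstep with h | h <;>
            (injection h with hq hk; subst hq; subst k)
          · exact ⟨rfl, interp_of_Edge hE⟩
          · exact ⟨rfl, Or.inr ⟨rfl, rfl, he0, hrest⟩⟩
        · rcases BStep.inv_and hbstep with h | h <;>
            (injection h with hq hk; subst hq; subst k)
          · exact ⟨rfl, h02⟩
          · obtain ⟨m, g, hm1, hmc, hg0, hgm, hge⟩ := hrest
            exact ⟨rfl, rfl, he0, m, g, hm1, hmc, by rw [hg0, h02], hgm, hge⟩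
      | all x φ =>
        rcases hI with ⟨rfl, rfl, hNc⟩ | ⟨rfl, rfl, hNc⟩
        · obtain ⟨a, h⟩ := BStep.inv_all hbstep
          injection h with hq hk; subst hq; subst k
          exact ⟨rfl, Or.inr ⟨rfl, rfl, hNc⟩⟩
        · obtain ⟨a, h⟩ := BStep.inv_all hbstep
          injection h with hq hk; subst hq; subst k
          set sa' := Function.update sa 1 a with hsa'
          refine ⟨rfl, Or.inl ⟨rfl, rfl, hNc, ?_⟩⟩
          by_cases heq : sa' 0 = sa' 1
          · exact Or.inl heq
          · obtain ⟨m, g, hmN, hg0, hgm, hge⟩ := hreach (sa' 0) (sa' 1)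
            refine Or.inr ⟨m, g, ?_, by omega, hg0, hgm, hge⟩
            by_contra hm
            have : m = 0 := by omega
            subst this
            exact heq (by rw [← hg0, hgm])
      | bot => exact hI.elim
      | not φ => exact hI.elim
      | eq i j => exact absurd ht (by simp [gameOmega, goTurn, posTurn])
      | rel R a => exact absurd ht (by simp [gameOmega, goTurn, posTurn])
      | claim L => exact absurd ht (by simp [gameOmega, goTurn, posTurn])
      | or φ ψ => exact absurd ht (by simp [gameOmega, goTurn, posTurn])
      | ex x φ => exact absurd ht (by simp [gameOmega, goTurn, posTurn])
      | lab L φ => exact absurd ht (by simp [gameOmega, goTurn, posTurn])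
  · -- Eloise's strategy moves preserve the invariant
    rintro (_ | n' | ⟨⟨form, e, sa, b⟩, c⟩) hInv ht hnd
    · exact absurd ht (by simp [gameOmega, goTurn])
    · exact ⟨rfl, Or.inl ⟨rfl, rfl, by omega⟩⟩
    · obtain ⟨hb, hI⟩ := hInv
      subst hb
      cases form with
      | bot => exact hI.elim
      | not φ => exact hI.elim
      | all x φ => exact absurd ht (by simp [gameOmega, goTurn, posTurn])
      | and φ ψ => exact absurd ht (by simp [gameOmega, goTurn, posTurn])
      | eq i j => exact absurd (fun y hy => by
          obtain ⟨q, k, _, hb2⟩ := GOedge_inner hy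
          cases hb2) hnd
      | rel R a => exact absurd (fun y hy => by
          obtain ⟨q, k, _, hb2⟩ := GOedge_inner hy
          cases hb2) hnd
      | or φ ψ =>
        rcases hI with ⟨rfl, rfl, hNc, hor⟩ | ⟨rfl, rfl, he0, hcond⟩
        · show InvD M N (if SCLFormula.eq 0 1 = SCLFormula.eq 0 1 then
            (if sa 0 = sa 1 then _ else _) else _)
          rw [if_pos rfl]
          by_cases heq : sa 0 = sa 1
          · rw [if_pos heq]
            exact ⟨rfl, heq⟩
          · rw [if_neg heq]
            rcases hor with h | h
            · exact absurd h heq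
            · exact ⟨rfl, rfl, rfl, h⟩
        · show InvD M N (if Eform 0 1 = SCLFormula.eq 0 1 then (if sa 0 = sa 1 then _ else _)
            else if h : CondD M sa c then (if pickMD h = 1 then _ else _) else _)
          rw [if_neg (by simp [Eform]), dif_pos hcond]
          obtain ⟨hm1, hmc, hg0, hgm, hge⟩ := pickD_spec hcond
          by_cases hone : pickMD hcond = 1
          · rw [if_pos hone]
            refine ⟨rfl, interp_of_Edge ?_⟩
            have := hge 0 (by omega)
            rw [hg0] at this
            rw [hone] at hgm
            rw [hgm] at this
            exact this
          · rw [if_neg hone]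
            exact ⟨rfl, Or.inl ⟨rfl, rfl, he0, hcond, hone⟩⟩
      | lab L φ =>
        obtain ⟨rfl, rfl, hcond⟩ := hI
        exact ⟨rfl, Or.inr ⟨rfl, rfl, by simp, hcond⟩⟩
      | claim L =>
        obtain ⟨rfl, he0, m, g, hm1, hmc, hg0, hgm, hge⟩ := hI
        obtain ⟨c', rfl⟩ : ∃ c', c = c' + 1 := ⟨c - 1, by omega⟩
        show InvD M N ((e 0).elim .start (fun χ => .inner ⟨χ, e, sa, true⟩ c'))
        rw [he0]
        exact ⟨rfl, rfl, rfl, m, g, hm1, by omega, hg0, hgm, hge⟩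
      | ex x φ =>
        rcases hI with ⟨rfl, rfl, he0, hcond, hone⟩ | ⟨rfl, rfl, he0, hrest⟩
        · -- x = 2: pick the next vertex on the walk
          obtain ⟨hm1, hmc, hg0, hgm, hge⟩ := pickD_spec hcond
          have hwit : diamWitness M sa c 2 = pickGD hcond 1 := by
            rw [diamWitness]
            rw [dif_pos hcond]
          refine ⟨rfl, Or.inl ⟨rfl, rfl, ?_, ?_, ?_⟩⟩
          · show Edge M (Function.update sa 2 _ 0) (Function.update sa 2 _ 2)
            rw [Function.update_of_ne (by norm_num : (0 : ℕ) ≠ 2), Function.update_self, hwit]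
            have h' := hge 0 (by omega)
            rwa [hg0] at h'
          · exact he0
          · refine ⟨pickMD hcond - 1, fun t => pickGD hcond (t + 1), by omega, by omega, ?_, ?_, ?_⟩
            · show pickGD hcond 1 = Function.update sa 2 _ 2
              rw [Function.update_self, hwit]
            · show pickGD hcond (pickMD hcond - 1 + 1) = Function.update sa 2 _ 1
              rw [Function.update_of_ne (by norm_num : (1 : ℕ) ≠ 2),
                show pickMD hcond - 1 + 1 = pickMD hcond from by omega]
              exact hgm
            · intro i hi
              exact hge (i + 1) (by omega)
        · -- x = 0: pick sa 2
          have hwit : diamWitness M sa c 0 = sa 2 := rfl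
          obtain ⟨m, g, hm1, hmc, hg0, hgm, hge⟩ := hrest
          refine ⟨rfl, Or.inr ⟨rfl, rfl, ?_, ?_, ?_⟩⟩
          · show Function.update sa 0 _ 0 = Function.update sa 0 _ 2
            rw [Function.update_self, Function.update_of_ne (by norm_num : (2 : ℕ) ≠ 0), hwit]
          · exact he0
          · refine ⟨m, g, hm1, hmc, ?_, ?_, hge⟩
            · show g 0 = Function.update sa 0 _ 2
              rw [Function.update_of_ne (by norm_num : (2 : ℕ) ≠ 0)]
              exact hg0
            · show g m = Function.update sa 0 _ 1
              rw [Function.update_of_ne (by norm_num : (1 : ℕ) ≠ 0)]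
              exact hgm
  · -- legality
    rintro (_ | n' | ⟨⟨form, e, sa, b⟩, c⟩) ht hex
    · exact absurd ht (by simp [gameOmega, goTurn])
    · exact GOStep.eloisePick n' (n' + N) (by omega)
    · cases form with
      | bot =>
        obtain ⟨y, hy⟩ := hex
        obtain ⟨q, k, _, hb2⟩ := GOedge_inner hy
        cases hb2
      | eq i j =>
        obtain ⟨y, hy⟩ := hex
        obtain ⟨q, k, _, hb2⟩ := GOedge_inner hy
        cases hb2
      | rel R a =>
        obtain ⟨y, hy⟩ := hex
        obtain ⟨q, k, _, hb2⟩ := GOedge_inner hy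
        cases hb2
      | not φ => exact GOStep.play _ _ _ _ (BStep.neg φ e sa b c)
      | and φ ψ => exact GOStep.play _ _ _ _ (BStep.andLeft φ ψ e sa b c)
      | or φ ψ =>
        show (gameOmega M phiDiam s0).edge _ (FDiam M s0 N _)
        rw [FDiam]
        split
        · split
          · exact GOStep.play _ _ _ _ (BStep.orLeft φ ψ e sa b c)
          · exact GOStep.play _ _ _ _ (BStep.orRight φ ψ e sa b c)
        · split
          · split
            · exact GOStep.play _ _ _ _ (BStep.orLeft φ ψ e sa b c)
            · exact GOStep.play _ _ _ _ (BStep.orRight φ ψ e sa b c)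
          · exact GOStep.play _ _ _ _ (BStep.orLeft φ ψ e sa b c)
      | ex x φ => exact GOStep.play _ _ _ _ (BStep.exStep x φ e sa b c _)
      | all x φ => exact GOStep.play _ _ _ _ (BStep.allStep x φ e sa b c _)
      | lab L φ => exact GOStep.play _ _ _ _ (BStep.labStep L φ e sa b c)
      | claim L =>
        obtain ⟨y, hy⟩ := hex
        obtain ⟨q, k, rfl, hb2⟩ := GOedge_inner hy
        obtain ⟨χ, c', rfl, hχ, _⟩ := BStep.inv_claim hb2
        show (gameOmega M phiDiam s0).edge _
          ((e L).elim .start (fun χ => .inner ⟨χ, e, sa, b⟩ c'))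
        rw [hχ]
        exact GOStep.play _ _ _ _ (BStep.claimStep L e sa b χ c' hχ)

end DiamEasy

/-- Under bounded semantics, `phiCycle` defines the class of
directed graphs (finite or infinite) containing a cycle, and `phiDiam` defines
the class of directed graphs of finite diameter. -/
theorem cycle_and_finite_diameter_definable_in_BndSCL :
    (∀ M : Struct.{u} binVocab,
      (∀ s : ℕ → M.Dom, BndTrue M s phiCycle) ↔ HasCycle M) ∧
    (∀ M : Struct.{u} binVocab,
      (∀ s : ℕ → M.Dom, BndTrue M s phiDiam) ↔ FiniteDiameter M) := by
  constructor
  · intro M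
    constructor
    · intro h
      exact cycle_of_bnd (h (fun _ => Classical.arbitrary M.Dom))
    · rintro ⟨n, f, hn, hedges, hclosed, _⟩ s
      exact bnd_of_cycle hn hedges hclosed
  · intro M
    constructor
    · intro h
      exact diam_of_bnd (h (fun _ => Classical.arbitrary M.Dom))
    · rintro ⟨n, hreach⟩ s
      exact bnd_of_diam hreach
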